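/- arXiv:0801.3747 — 6 statements merged into one kernel-verified Lean document; each statement's English description precedes it below -/
import Mathlib

section
/- For positive integers m and n, the Davenport constant of the group C_m ⊕ C_{mn} equals m + mn − 1, i.e., every sequence of m + mn − 1 elements of C_m ⊕ C_{mn} has a nonempty subsequence summing to zero, and there is a sequence of length m + mn − 2 with no such subsequence. -/
lemma aux_exists_le_card {α : Type*} (S : Multiset α) (k : ℕ) (h : k ≤ Multiset.card S) :
    ∃ S' ≤ S, Multiset.card S' = k := by
  refine ⟨(S.toList.take k : List α), ?_, ?_⟩
  · have h1 := (List.take_sublist k S.toList).subperm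
    have := Multiset.coe_le.mpr h1
    rwa [Multiset.coe_toList] at this
  · simpa using Nat.min_eq_left (by simpa using h)

lemma aux_exists_of_le_map {α β : Type*} (f : α → β) :
    ∀ (T : Multiset β) (S : Multiset α), T ≤ S.map f → ∃ B ≤ S, B.map f = T := by
  classical
  intro T
  induction T using Multiset.induction with
  | empty => exact fun S _ => ⟨0, zero_le, rfl⟩
  | cons b T ih =>
    intro S h
    have hb : b ∈ S.map f := Multiset.mem_of_le h (Multiset.mem_cons_self _ _)
    obtain ⟨a, haS, rfl⟩ := Multiset.mem_map.mp hb
    have h1 : (S.erase a).map f = (S.map f).erase (f a) := by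
      have : f a ::ₘ (S.erase a).map f = f a ::ₘ (S.map f).erase (f a) := by
        rw [← Multiset.map_cons, Multiset.cons_erase haS, Multiset.cons_erase hb]
      exact (Multiset.cons_inj_right _).mp this
    have h2 : T ≤ (S.erase a).map f := by
      rw [h1]
      have := Multiset.erase_le_erase (f a) h
      simpa using this
    obtain ⟨B, hBle, hBmap⟩ := ih (S.erase a) h2
    refine ⟨a ::ₘ B, ?_, by rw [Multiset.map_cons, hBmap]⟩
    calc a ::ₘ B ≤ a ::ₘ S.erase a := (Multiset.cons_le_cons_iff a).mpr hBle
    _ = S := Multiset.cons_erase haS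


lemma aux_cyclic (k : ℕ) (hk : 0 < k) (S : Multiset (ZMod k)) (h : k ≤ Multiset.card S) :
    ∃ T ≤ S, T ≠ 0 ∧ T.sum = 0 := by
  haveI : NeZero k := ⟨hk.ne'⟩
  set l := S.toList with hl
  have hlen : l.length = Multiset.card S := Multiset.length_toList S
  have key : ∀ i j : Fin (k+1), (i : ℕ) < (j : ℕ) →
      ((l.take i).sum : ZMod k) = (l.take j).sum → ∃ T ≤ S, T ≠ 0 ∧ T.sum = 0 := by
    intro i j hlt hfe
    set B := (l.drop (i : ℕ)).take ((j : ℕ) - (i : ℕ)) with hB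
    have hjle : (j : ℕ) ≤ l.length := by omega
    refine ⟨(B : Multiset (ZMod k)), ?_, ?_, ?_⟩
    · have h1 : List.Sublist B (l.drop (i:ℕ)) := List.take_sublist _ _
      have h2 : List.Sublist (l.drop (i:ℕ)) l := List.drop_sublist _ _
      have := Multiset.coe_le.mpr (h1.trans h2).subperm
      rwa [hl, Multiset.coe_toList] at this
    · have hBlen : B.length = (j : ℕ) - (i : ℕ) := by
        simp only [hB, List.length_take, List.length_drop]
        omega
      intro hzero
      rw [Multiset.coe_eq_zero] at hzero
      have : B.length = 0 := by rw [hzero]; rfl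
      omega
    · have htake : l.take (j : ℕ) = l.take (i : ℕ) ++ B := by
        rw [hB, ← List.take_add]
        congr 1
        omega
      have h3 : (l.take (j:ℕ)).sum = (l.take (i:ℕ)).sum + B.sum := by
        rw [htake, List.sum_append]
      rw [← hfe, left_eq_add] at h3
      simpa using h3
  have hcard : Fintype.card (ZMod k) < Fintype.card (Fin (k+1)) := by
    rw [ZMod.card, Fintype.card_fin]; omega
  obtain ⟨i, j, hij, hfe⟩ := Fintype.exists_ne_map_eq_of_card_lt
    (fun i : Fin (k+1) => ((l.take i).sum : ZMod k)) hcard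
  rcases Nat.lt_or_ge (i : ℕ) (j : ℕ) with hlt | hge
  · exact key i j hlt hfe
  · have hlt : (j : ℕ) < (i : ℕ) := by
      rcases Nat.eq_or_lt_of_le hge with h' | h'
      · exact absurd (Fin.ext h'.symm) hij
      · exact h'
    exact key j i hlt hfe.symm


open MvPolynomial in
lemma aux_cw (p : ℕ) [Fact p.Prime] {N r : ℕ} (c : Fin r → Fin N → ZMod p)
    (hdeg : r * (p - 1) < N) :
    ∃ I : Finset (Fin N), I.Nonempty ∧ ∀ j, ∑ i ∈ I, c j i = 0 := by
  classical
  have hp : p.Prime := Fact.out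
  set f : Fin r → MvPolynomial (Fin N) (ZMod p) :=
    fun j => ∑ i : Fin N, MvPolynomial.C (c j i) * (X i) ^ (p - 1) with hf
  have hdeg' : (∑ j : Fin r, (f j).totalDegree) < Fintype.card (Fin N) := by
    have h1 : ∀ j, (f j).totalDegree ≤ p - 1 := by
      intro j
      refine le_trans (totalDegree_finset_sum _ _) ?_
      refine Finset.sup_le fun i _ => ?_
      refine le_trans (totalDegree_mul _ _) ?_
      simp [totalDegree_C, totalDegree_X_pow]
    calc (∑ j : Fin r, (f j).totalDegree) ≤ ∑ j : Fin r, (p - 1) :=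
          Finset.sum_le_sum fun j _ => h1 j
      _ = r * (p - 1) := by simp [Finset.sum_const, mul_comm]
      _ < Fintype.card (Fin N) := by simpa using hdeg
  have hdvd := char_dvd_card_solutions_of_fintype_sum_lt p hdeg'
  have hzero : ∀ j, eval (fun _ : Fin N => (0 : ZMod p)) (f j) = 0 := by
    intro j
    simp [hf, eval_sum, zero_pow (Nat.sub_ne_zero_of_lt hp.one_lt)]
  have hpos : 0 < Fintype.card { x : Fin N → ZMod p // ∀ j, eval x (f j) = 0 } :=
    Fintype.card_pos_iff.mpr ⟨⟨_, hzero⟩⟩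
  have hdvd' : p ∣ Fintype.card { x : Fin N → ZMod p // ∀ j, eval x (f j) = 0 } := by
    convert hdvd using 2
  have h2 : 1 < Fintype.card { x : Fin N → ZMod p // ∀ j, eval x (f j) = 0 } := by
    have := Nat.le_of_dvd hpos hdvd'
    have := hp.one_lt
    omega
  obtain ⟨x, y, hxy⟩ := Fintype.exists_pair_of_one_lt_card h2
  -- one of x, y is a nonzero solution
  have hnz : ∃ z : { x : Fin N → ZMod p // ∀ j, eval x (f j) = 0 },
      (z : Fin N → ZMod p) ≠ 0 := by
    by_cases hx : (x : Fin N → ZMod p) = 0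
    · refine ⟨y, fun hy => hxy ?_⟩
      exact Subtype.ext (hx.trans hy.symm)
    · exact ⟨x, hx⟩
  obtain ⟨⟨z, hzsol⟩, hznz⟩ := hnz
  set I : Finset (Fin N) := Finset.univ.filter (fun i => z i ≠ 0) with hI
  have hInem : I.Nonempty := by
    rcases Function.ne_iff.mp hznz with ⟨i, hi⟩
    refine ⟨i, ?_⟩
    simp only [hI, Finset.mem_filter, Finset.mem_univ, true_and]
    simpa using hi
  refine ⟨I, hInem, fun j => ?_⟩
  have he : eval z (f j) = ∑ i : Fin N, c j i * z i ^ (p - 1) := by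
    simp [hf, eval_sum]
  have hsplit : (∑ i : Fin N, c j i * z i ^ (p - 1)) = ∑ i ∈ I, c j i := by
    rw [← Finset.sum_filter_add_sum_filter_not Finset.univ (fun i => z i ≠ 0)]
    have hz1 : ∀ i ∈ I, c j i * z i ^ (p - 1) = c j i := by
      intro i hi
      have : z i ≠ 0 := by simpa [hI] using hi
      rw [ZMod.pow_card_sub_one_eq_one this, mul_one]
    have hz0 : ∀ i ∈ Finset.univ.filter (fun i => ¬ z i ≠ 0), c j i * z i ^ (p - 1) = 0 := by
      intro i hi
      have : z i = 0 := by simpa using hi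
      rw [this, zero_pow (Nat.sub_ne_zero_of_lt hp.one_lt), mul_zero]
    rw [Finset.sum_congr rfl hz1, Finset.sum_eq_zero hz0, add_zero]
  rw [← hsplit, ← he, hzsol j]

-- bridge: from index set to sub-multiset
lemma aux_index_sub (p : ℕ) (l : List (ZMod p × ZMod p)) (I : Finset (Fin l.length))
    (hne : I.Nonempty) (h1 : ∑ i ∈ I, (l.get i).1 = 0) (h2 : ∑ i ∈ I, (l.get i).2 = 0) :
    ∃ T : Multiset (ZMod p × ZMod p), T ≤ (l : Multiset (ZMod p × ZMod p)) ∧ T ≠ 0 ∧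
      Multiset.card T = I.card ∧ T.sum = 0 := by
  refine ⟨Multiset.map l.get I.val, ?_, ?_, ?_, ?_⟩
  · have hle : I.val ≤ (Finset.univ : Finset (Fin l.length)).val :=
      Finset.val_le_iff.mpr (Finset.subset_univ I)
    calc Multiset.map l.get I.val ≤ Multiset.map l.get Finset.univ.val :=
          Multiset.map_le_map hle
    _ = (l : Multiset (ZMod p × ZMod p)) := by rw [Fin.univ_val_map, List.ofFn_get]
  · intro h0
    have := congrArg Multiset.card h0
    simp only [Multiset.card_map, Multiset.card_zero] at this
    exact hne.ne_empty (Finset.card_eq_zero.mp this)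
  · simp
  · have hfst : ((Multiset.map l.get I.val).sum).1 = 0 := by
      have := (AddMonoidHom.fst (ZMod p) (ZMod p)).map_multiset_sum (Multiset.map l.get I.val)
      simp only [Multiset.map_map] at this
      rw [show ((AddMonoidHom.fst (ZMod p) (ZMod p)) ((Multiset.map l.get I.val).sum)) =
        ((Multiset.map l.get I.val).sum).1 from rfl] at this
      rw [this]
      exact h1
    have hsnd : ((Multiset.map l.get I.val).sum).2 = 0 := by
      have := (AddMonoidHom.snd (ZMod p) (ZMod p)).map_multiset_sum (Multiset.map l.get I.val)
      simp only [Multiset.map_map] at this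
      rw [show ((AddMonoidHom.snd (ZMod p) (ZMod p)) ((Multiset.map l.get I.val).sum)) =
        ((Multiset.map l.get I.val).sum).2 from rfl] at this
      rw [this]
      exact h2
    exact Prod.ext hfst hsnd


lemma aux_D (p : ℕ) [Fact p.Prime] (S : Multiset (ZMod p × ZMod p))
    (h : 2 * p - 1 ≤ Multiset.card S) :
    ∃ T ≤ S, T ≠ 0 ∧ Multiset.card T ≤ 2 * p - 1 ∧ T.sum = 0 := by
  have hp : p.Prime := Fact.out
  obtain ⟨S', hS'le, hS'card⟩ := aux_exists_le_card S (2 * p - 1) h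
  set l := S'.toList with hl
  have hlen : l.length = 2 * p - 1 := by rw [hl, Multiset.length_toList, hS'card]
  have hdeg : 2 * (p - 1) < l.length := by
    have := hp.two_le; omega
  obtain ⟨I, hne, hsum⟩ := aux_cw p
    (![fun i => (l.get i).1, fun i => (l.get i).2]) hdeg
  obtain ⟨T, hTle, hTne, hTcard, hTsum⟩ := aux_index_sub p l I hne
    (by simpa using hsum 0) (by simpa using hsum 1)
  refine ⟨T, ?_, hTne, ?_, hTsum⟩
  · calc T ≤ (l : Multiset (ZMod p × ZMod p)) := hTle
    _ = S' := by rw [hl, Multiset.coe_toList]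
    _ ≤ S := hS'le
  · calc Multiset.card T = I.card := hTcard
    _ ≤ Fintype.card (Fin l.length) := Finset.card_le_univ I
    _ = 2 * p - 1 := by rw [Fintype.card_fin, hlen]

lemma aux_eta (p : ℕ) [Fact p.Prime] (S : Multiset (ZMod p × ZMod p))
    (h : 3 * p - 2 ≤ Multiset.card S) :
    ∃ T ≤ S, T ≠ 0 ∧ Multiset.card T ≤ p ∧ T.sum = 0 := by
  have hp : p.Prime := Fact.out
  have hp2 := hp.two_le
  obtain ⟨S', hS'le, hS'card⟩ := aux_exists_le_card S (3 * p - 2) h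
  set l := S'.toList with hl
  have hlen : l.length = 3 * p - 2 := by rw [hl, Multiset.length_toList, hS'card]
  have hdeg : 3 * (p - 1) < l.length := by omega
  obtain ⟨I, hne, hsum⟩ := aux_cw p
    (![fun i => (l.get i).1, fun i => (l.get i).2, fun _ => 1]) hdeg
  have hpdvd : p ∣ I.card := by
    have h3 := hsum 2
    simp only [Matrix.cons_val_two, Matrix.tail_cons, Matrix.head_cons] at h3
    rw [Finset.sum_const, nsmul_eq_mul, mul_one] at h3
    exact (ZMod.natCast_eq_zero_iff _ _).mp h3
  obtain ⟨T, hTle, hTne, hTcard, hTsum⟩ := aux_index_sub p l I hne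
    (by simpa using hsum 0) (by simpa using hsum 1)
  have hTleS : T ≤ S := by
    calc T ≤ (l : Multiset (ZMod p × ZMod p)) := hTle
    _ = S' := by rw [hl, Multiset.coe_toList]
    _ ≤ S := hS'le
  have hIcard_le : I.card ≤ 3 * p - 2 := by
    calc I.card ≤ Fintype.card (Fin l.length) := Finset.card_le_univ I
    _ = 3 * p - 2 := by rw [Fintype.card_fin, hlen]
  have hIpos : 0 < I.card := Finset.card_pos.mpr hne
  obtain ⟨t, ht⟩ := hpdvd
  have ht12 : t = 1 ∨ t = 2 := by
    rcases Nat.lt_or_ge t 3 with h' | h'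
    · interval_cases t
      · omega
      · left; rfl
      · right; rfl
    · exfalso
      have : p * 3 ≤ p * t := Nat.mul_le_mul_left p h'
      omega
  rcases ht12 with rfl | rfl
  · exact ⟨T, hTleS, hTne, by omega, hTsum⟩
  · -- card T = 2p; extract smaller zero-sum
    have hTcard2 : Multiset.card T = 2 * p := by omega
    obtain ⟨T₀, hT₀le, hT₀card⟩ := aux_exists_le_card T (2 * p - 1) (by omega)
    obtain ⟨T', hT'le, hT'ne, hT'card, hT'sum⟩ := aux_D p T₀ (by omega)
    have hT'leT : T' ≤ T := le_trans hT'le hT₀le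
    rcases le_or_gt (Multiset.card T') p with hcase | hcase
    · exact ⟨T', le_trans hT'leT hTleS, hT'ne, hcase, hT'sum⟩
    · refine ⟨T - T', le_trans (Multiset.sub_le_self _ _) hTleS, ?_, ?_, ?_⟩
      · have hcard : Multiset.card (T - T') = 2 * p - Multiset.card T' := by
          rw [Multiset.card_sub hT'leT, hTcard2]
        intro h0
        have := congrArg Multiset.card h0
        rw [hcard] at this
        simp only [Multiset.card_zero] at this
        have : Multiset.card T' ≤ 2 * p - 1 := by
          calc Multiset.card T' ≤ Multiset.card T₀ := Multiset.card_le_card hT'le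
          _ = 2 * p - 1 := hT₀card
        omega
      · rw [Multiset.card_sub hT'leT, hTcard2]; omega
      · have hadd : T - T' + T' = T := tsub_add_cancel_of_le hT'leT
        have := congrArg Multiset.sum hadd
        rw [Multiset.sum_add, hT'sum, add_zero] at this
        rw [this, hTsum]

lemma aux_extract {G Q : Type*} [AddCommGroup G] [AddCommMonoid Q] (φ : G →+ Q) (p : ℕ)
    (hη : ∀ M : Multiset Q, 3 * p - 2 ≤ Multiset.card M →
      ∃ T ≤ M, T ≠ 0 ∧ Multiset.card T ≤ p ∧ T.sum = 0)
    (hD : ∀ M : Multiset Q, 2 * p - 1 ≤ Multiset.card M → ∃ T ≤ M, T ≠ 0 ∧ T.sum = 0) :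
    ∀ (d : ℕ) (S : Multiset G), p * d + 2 * p - 1 ≤ Multiset.card S →
      ∃ Bs : Multiset (Multiset G), Multiset.card Bs = d + 1 ∧ Bs.sum ≤ S ∧
        ∀ B ∈ Bs, B ≠ 0 ∧ φ B.sum = 0 := by
  classical
  intro d
  induction d with
  | zero =>
    intro S hS
    obtain ⟨T, hTle, hTne, hTsum⟩ := hD (S.map φ) (by rw [Multiset.card_map]; omega)
    obtain ⟨B, hBle, hBmap⟩ := aux_exists_of_le_map φ T S hTle
    have hBne : B ≠ 0 := by
      intro h0; rw [h0] at hBmap; exact hTne (hBmap.symm.trans (Multiset.map_zero φ))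
    have hBsum : φ B.sum = 0 := by
      rw [AddMonoidHom.map_multiset_sum, hBmap, hTsum]
    refine ⟨{B}, by simp, by simpa using hBle, ?_⟩
    intro B' hB'
    rw [Multiset.mem_singleton] at hB'
    subst hB'
    exact ⟨hBne, hBsum⟩
  | succ d ih =>
    intro S hS
    have hmul : p ≤ p * (d + 1) := Nat.le_mul_of_pos_right p (by omega)
    obtain ⟨T, hTle, hTne, hTcard, hTsum⟩ := hη (S.map φ)
      (by rw [Multiset.card_map]; omega)
    obtain ⟨B, hBle, hBmap⟩ := aux_exists_of_le_map φ T S hTle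
    have hBcard : Multiset.card B ≤ p := by
      rw [← Multiset.card_map φ B, hBmap] at *; exact hTcard
    have hBne : B ≠ 0 := by
      intro h0; rw [h0] at hBmap; exact hTne (hBmap.symm.trans (Multiset.map_zero φ))
    have hBsum : φ B.sum = 0 := by
      rw [AddMonoidHom.map_multiset_sum, hBmap, hTsum]
    have hcard' : p * d + 2 * p - 1 ≤ Multiset.card (S - B) := by
      rw [Multiset.card_sub hBle]
      have := Multiset.card_le_card hBle
      have hpd : p * (d + 1) = p * d + p := by ring
      omega
    obtain ⟨Bs', hBs'card, hBs'le, hBs'prop⟩ := ih (S - B) hcard'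
    refine ⟨B ::ₘ Bs', by simp [hBs'card], ?_, ?_⟩
    · rw [Multiset.sum_cons]
      calc B + Bs'.sum ≤ B + (S - B) := add_le_add le_rfl hBs'le
      _ = S := by rw [add_comm]; exact tsub_add_cancel_of_le hBle
    · intro B' hB'
      rcases Multiset.mem_cons.mp hB' with rfl | hmem
      · exact ⟨hBne, hBsum⟩
      · exact hBs'prop B' hmem


noncomputable def auxIota (k p q : ℕ) (h : q * p = k) : ZMod q →+ ZMod k :=
  ZMod.lift q ⟨(zmultiplesHom (ZMod k)) ((p : ℕ) : ZMod k), by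
    simp only [zmultiplesHom_apply]
    rw [natCast_zsmul, ← Nat.cast_smul_eq_nsmul (ZMod k), smul_eq_mul, ← Nat.cast_mul,
      h, ZMod.natCast_self]⟩

lemma auxIota_natCast (k p q : ℕ) (h : q * p = k) (c : ℕ) :
    auxIota k p q h ((c : ℕ) : ZMod q) = ((c * p : ℕ) : ZMod k) := by
  have h1 : ((c : ℕ) : ZMod q) = ((c : ℤ) : ZMod q) := by push_cast; rfl
  rw [auxIota, h1, ZMod.lift_coe]
  simp only [zmultiplesHom_apply]
  rw [natCast_zsmul, ← Nat.cast_smul_eq_nsmul (ZMod k), smul_eq_mul, ← Nat.cast_mul]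

lemma auxIota_section (k p q : ℕ) (hk : 0 < k) (h : q * p = k) (a : ZMod k)
    (ha : ZMod.castHom (Dvd.intro_left q h) (ZMod p) a = 0) :
    ∃ x : ZMod q, auxIota k p q h x = a := by
  haveI : NeZero k := ⟨hk.ne'⟩
  have hval : a = ((a.val : ℕ) : ZMod k) := (ZMod.natCast_zmod_val a).symm
  have hcast : ((a.val : ℕ) : ZMod p) = 0 := by
    rw [← ha, hval]
    simp [map_natCast]
  have hpdvd : p ∣ a.val := (ZMod.natCast_eq_zero_iff _ _).mp hcast
  refine ⟨((a.val / p : ℕ) : ZMod q), ?_⟩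
  rw [auxIota_natCast, Nat.div_mul_cancel hpdvd, ← hval]

lemma aux_mem_le_sum {α : Type*} : ∀ (J : Multiset (Multiset α)) (B : Multiset α),
    B ∈ J → B ≤ J.sum := by
  intro J
  induction J using Multiset.induction with
  | empty => intro B h; simp at h
  | cons C J ih =>
    intro B h
    rw [Multiset.sum_cons]
    rcases Multiset.mem_cons.mp h with rfl | hmem
    · exact Multiset.le_add_right _ _
    · exact le_trans (ih B hmem) (Multiset.le_add_left _ _)

lemma aux_sum_sum {α : Type*} [AddCommMonoid α] : ∀ (J : Multiset (Multiset α)),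
    (J.sum).sum = (J.map Multiset.sum).sum := by
  intro J
  induction J using Multiset.induction with
  | empty => simp
  | cons C J ih => simp [Multiset.sum_cons, ih]

lemma aux_upper : ∀ m : ℕ, 0 < m → ∀ n : ℕ, 0 < n →
    ∀ S : Multiset (ZMod m × ZMod (m * n)), m + m * n - 1 ≤ Multiset.card S →
    ∃ T ≤ S, T ≠ 0 ∧ T.sum = 0 := by
  intro m
  induction m using Nat.strong_induction_on with
  | _ m ih =>
  intro hm n hn S hS
  by_cases hm1 : m = 1
  · -- cyclic case
    subst hm1
    have hk : 0 < 1 * n := by omega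
    set φ : ZMod 1 × ZMod (1 * n) →+ ZMod (1 * n) := AddMonoidHom.snd _ _ with hφ
    have hcard : 1 * n ≤ Multiset.card (S.map φ) := by
      rw [Multiset.card_map]; omega
    obtain ⟨T', hT'le, hT'ne, hT'sum⟩ := aux_cyclic (1 * n) hk _ hcard
    obtain ⟨B, hBle, hBmap⟩ := aux_exists_of_le_map _ T' S hT'le
    refine ⟨B, hBle, ?_, ?_⟩
    · intro h0; rw [h0] at hBmap; exact hT'ne (hBmap.symm.trans (by simp))
    · refine Prod.ext (Subsingleton.elim _ _) ?_
      have h1 := φ.map_multiset_sum B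
      have h2 : φ B.sum = B.sum.2 := rfl
      rw [h2, hBmap] at h1
      rw [h1, hT'sum]
      rfl
  · -- composite case
    have hm2 : 2 ≤ m := by omega
    have hp : m.minFac.Prime := Nat.minFac_prime (by omega)
    set p := m.minFac with hpdef
    haveI : Fact p.Prime := ⟨hp⟩
    have hpm : p ∣ m := Nat.minFac_dvd m
    have hpmn : p ∣ m * n := hpm.mul_right n
    set m' := m / p with hm'def
    have hq1 : m' * p = m := Nat.div_mul_cancel hpm
    have hm'pos : 0 < m' := Nat.div_pos (Nat.minFac_le hm) hp.pos
    have hm'lt : m' < m := Nat.div_lt_self (by omega) hp.one_lt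
    have hq2 : (m' * n) * p = m * n := by rw [← hq1]; ring
    set φ : ZMod m × ZMod (m * n) →+ ZMod p × ZMod p :=
      ((ZMod.castHom hpm (ZMod p)).toAddMonoidHom).prodMap
        ((ZMod.castHom hpmn (ZMod p)).toAddMonoidHom) with hφ
    set ι : ZMod m' × ZMod (m' * n) →+ ZMod m × ZMod (m * n) :=
      (auxIota m p m' hq1).prodMap (auxIota (m * n) p (m' * n) hq2) with hι
    have hsec : ∀ s : ZMod m × ZMod (m * n), φ s = 0 →
        ∃ t : ZMod m' × ZMod (m' * n), ι t = s := by
      intro s hs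
      rw [hφ] at hs
      have hs1 : ZMod.castHom hpm (ZMod p) s.1 = 0 := congrArg Prod.fst hs
      have hs2 : ZMod.castHom hpmn (ZMod p) s.2 = 0 := congrArg Prod.snd hs
      obtain ⟨x1, hx1⟩ := auxIota_section m p m' (by omega) hq1 s.1 hs1
      obtain ⟨x2, hx2⟩ := auxIota_section (m * n) p (m' * n)
        (by have := Nat.mul_pos hm hn; omega) hq2 s.2 hs2
      exact ⟨(x1, x2), Prod.ext hx1 hx2⟩
    classical
    set ρ : ZMod m × ZMod (m * n) → ZMod m' × ZMod (m' * n) :=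
      fun s => if h : φ s = 0 then Classical.choose (hsec s h) else 0 with hρdef
    have hρ : ∀ s, φ s = 0 → ι (ρ s) = s := by
      intro s h
      rw [hρdef]
      simp only [dif_pos h]
      exact Classical.choose_spec (hsec s h)
    -- arithmetic
    have hmn1 : 1 ≤ m' * n := Nat.mul_pos hm'pos hn
    set d := m' + m' * n - 2 with hd
    have hd2 : d + 2 = m' + m' * n := by omega
    have he1 : p * m' = m := by rw [mul_comm]; exact hq1
    have he2 : p * (m' * n) = m * n := by rw [← he1]; ring
    have hpA : p * (d + 2) = m + m * n := by rw [hd2, Nat.mul_add, he1, he2]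
    have hpd2 : p * (d + 2) = p * d + 2 * p := by ring
    have hextract_card : p * d + 2 * p - 1 ≤ Multiset.card S := by omega
    obtain ⟨Bs, hBscard, hBsle, hBsprop⟩ := aux_extract φ p (aux_eta p)
      (fun M h => by
        obtain ⟨T, h1, h2, _, h4⟩ := aux_D p M h
        exact ⟨T, h1, h2, h4⟩) d S hextract_card
    set M := Bs.map (fun B => ρ B.sum) with hM
    have hMcard : m' + m' * n - 1 ≤ Multiset.card M := by
      rw [hM, Multiset.card_map, hBscard]; omega
    obtain ⟨T', hT'le, hT'ne, hT'sum⟩ := ih m' hm'lt hm'pos n hn M hMcard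
    obtain ⟨J, hJle, hJmap⟩ := aux_exists_of_le_map (fun B => ρ B.sum) T' Bs hT'le
    refine ⟨J.sum, ?_, ?_, ?_⟩
    · -- J.sum ≤ S
      obtain ⟨K, hK⟩ := Multiset.le_iff_exists_add.mp hJle
      calc J.sum ≤ J.sum + K.sum := Multiset.le_add_right _ _
        _ = Bs.sum := by rw [hK, Multiset.sum_add]
        _ ≤ S := hBsle
    · -- nonzero
      intro h0
      have hJne : J ≠ 0 := by
        intro hJ0
        rw [hJ0] at hJmap
        exact hT'ne (hJmap.symm.trans (by simp))
      obtain ⟨B, hBJ⟩ := Multiset.exists_mem_of_ne_zero hJne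
      have hBBs : B ∈ Bs := Multiset.mem_of_le hJle hBJ
      have hBne : B ≠ 0 := (hBsprop B hBBs).1
      have hBle : B ≤ J.sum := aux_mem_le_sum J B hBJ
      rw [h0] at hBle
      exact hBne (Multiset.le_zero.mp hBle)
    · -- sum zero
      have h1 : (J.sum).sum = (J.map Multiset.sum).sum := aux_sum_sum J
      have h2 : J.map Multiset.sum = J.map (fun B => ι (ρ B.sum)) := by
        refine Multiset.map_congr rfl ?_
        intro B hB
        exact (hρ B.sum (hBsprop B (Multiset.mem_of_le hJle hB)).2).symm
      have h3 : J.map (fun B => ι (ρ B.sum)) = (J.map (fun B => ρ B.sum)).map ι := by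
        rw [Multiset.map_map]
        rfl
      rw [h1, h2, h3, hJmap, ← AddMonoidHom.map_multiset_sum, hT'sum, map_zero]

lemma aux_lower (m n : ℕ) (hm : 0 < m) (hn : 0 < n) :
    ∃ S : Multiset (ZMod m × ZMod (m * n)), Multiset.card S = m + m * n - 2 ∧
      ∀ T : Multiset (ZMod m × ZMod (m * n)), T ≤ S → T ≠ 0 → T.sum ≠ 0 := by
  classical
  have hmn : 0 < m * n := Nat.mul_pos hm hn
  by_cases h11 : m = 1 ∧ n = 1
  · obtain ⟨rfl, rfl⟩ := h11
    exact ⟨0, by simp, fun T hT hTne => absurd (Multiset.le_zero.mp hT) hTne⟩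
  · set x : ZMod m × ZMod (m * n) := (1, 0) with hx
    set y : ZMod m × ZMod (m * n) := (0, 1) with hy
    have h2 : 2 ≤ m ∨ 2 ≤ m * n := by
      rcases Nat.lt_or_ge m 2 with h | h
      · right
        have hm1 : m = 1 := by omega
        subst hm1
        have : n ≠ 1 := fun hn1 => h11 ⟨rfl, hn1⟩
        omega
      · left; exact h
    have hxy : x ≠ y := by
      intro heq
      rcases h2 with h | h
      · have h1 : (1 : ZMod m) = 0 := congrArg Prod.fst heq
        rw [← Nat.cast_one] at h1
        have h3 := Nat.dvd_one.mp ((ZMod.natCast_eq_zero_iff 1 m).mp h1)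
        omega
      · have h1 : (0 : ZMod (m * n)) = 1 := congrArg Prod.snd heq
        rw [← Nat.cast_one] at h1
        have h3 := Nat.dvd_one.mp ((ZMod.natCast_eq_zero_iff 1 (m * n)).mp h1.symm)
        omega
    refine ⟨Multiset.replicate (m - 1) x + Multiset.replicate (m * n - 1) y, ?_, ?_⟩
    · rw [Multiset.card_add, Multiset.card_replicate, Multiset.card_replicate]
      omega
    · intro T hT hTne hTsum
      set S := Multiset.replicate (m - 1) x + Multiset.replicate (m * n - 1) y with hS
      set a := T.count x with ha
      set b := T.count y with hb
      have hSx : S.count x = m - 1 := by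
        rw [hS, Multiset.count_add, Multiset.count_replicate, Multiset.count_replicate,
          if_pos rfl, if_neg (Ne.symm hxy), add_zero]
      have hSy : S.count y = m * n - 1 := by
        rw [hS, Multiset.count_add, Multiset.count_replicate, Multiset.count_replicate,
          if_neg hxy, if_pos rfl, zero_add]
      have haBound : a ≤ m - 1 := hSx ▸ Multiset.count_le_of_le x hT
      have hbBound : b ≤ m * n - 1 := hSy ▸ Multiset.count_le_of_le y hT
      have hTeq : T = Multiset.replicate a x + Multiset.replicate b y := by
        ext z
        rw [Multiset.count_add, Multiset.count_replicate, Multiset.count_replicate]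
        by_cases hzx : z = x
        · subst hzx
          rw [if_pos rfl, if_neg (Ne.symm hxy)]
          omega
        · by_cases hzy : z = y
          · subst hzy
            rw [if_neg hxy, if_pos rfl]
            omega
          · rw [if_neg (fun h => hzx h.symm), if_neg (fun h => hzy h.symm)]
            by_contra hne
            have hzT : z ∈ T := Multiset.count_pos.mp (by omega)
            have hzS : z ∈ S := Multiset.mem_of_le hT hzT
            rw [hS, Multiset.mem_add] at hzS
            rcases hzS with h | h
            · exact hzx (Multiset.eq_of_mem_replicate h)
            · exact hzy (Multiset.eq_of_mem_replicate h)
      have hsum : T.sum = ((a : ZMod m), (b : ZMod (m * n))) := by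
        rw [hTeq, Multiset.sum_add, Multiset.sum_replicate, Multiset.sum_replicate, hx, hy]
        rw [Prod.smul_mk, Prod.smul_mk, Prod.mk_add_mk]
        rw [smul_zero, smul_zero, nsmul_eq_mul, nsmul_eq_mul, mul_one, mul_one]
        rw [add_zero, zero_add]
      rw [hsum] at hTsum
      have hA : (a : ZMod m) = 0 := congrArg Prod.fst hTsum
      have hB : (b : ZMod (m * n)) = 0 := congrArg Prod.snd hTsum
      have hma : m ∣ a := (ZMod.natCast_eq_zero_iff a m).mp hA
      have hmb : m * n ∣ b := (ZMod.natCast_eq_zero_iff b (m * n)).mp hB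
      have ha0 : a = 0 := by
        rcases Nat.eq_zero_or_pos a with h | h
        · exact h
        · have := Nat.le_of_dvd h hma; omega
      have hb0 : b = 0 := by
        rcases Nat.eq_zero_or_pos b with h | h
        · exact h
        · have := Nat.le_of_dvd h hmb; omega
      rw [ha0, hb0] at hTeq
      simp only [Multiset.replicate_zero, add_zero] at hTeq
      exact hTne hTeq

/-- Davenport constant of `C_m ⊕ C_{mn}` equals `m + mn - 1`. -/
theorem stmt_0 (m n : ℕ) (hm : 0 < m) (hn : 0 < n) :
    (∀ S : Multiset (ZMod m × ZMod (m * n)), S.card = m + m * n - 1 →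
      ∃ T : Multiset (ZMod m × ZMod (m * n)), T ≤ S ∧ T ≠ 0 ∧ T.sum = 0) ∧
    (∃ S : Multiset (ZMod m × ZMod (m * n)), S.card = m + m * n - 2 ∧
      ∀ T : Multiset (ZMod m × ZMod (m * n)), T ≤ S → T ≠ 0 → T.sum ≠ 0) := by
  constructor
  · intro S hcard
    obtain ⟨T, h1, h2, h3⟩ := aux_upper m hm n hn S (le_of_eq hcard.symm)
    exact ⟨T, h1, h2, h3⟩
  · exact aux_lower m n hm hn
end

section
/- Let n be a positive integer and S a sequence over the cyclic group C_n. Then S is a minimal zero-sum sequence of maximal length (i.e., of length n) if and only if S = e^n for some generating element e of C_n. -/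
/-- A sequence over an abelian group: nonempty, sum zero, no proper nonempty zero-sum
subsequence. -/
def IsMinZeroSumSeq {G : Type*} [AddCommGroup G] (S : Multiset G) : Prop :=
  S ≠ 0 ∧ S.sum = 0 ∧ ∀ T : Multiset G, T ≤ S → T ≠ 0 → T ≠ S → T.sum ≠ 0

/-- Partial sums of an ordering of a minimal zero-sum sequence of length `n` over `ZMod n`
are injective. -/
lemma partial_inj {n : ℕ} (hn : 0 < n) (l : List (ZMod n)) (hl : l.length = n)
    (hmin : IsMinZeroSumSeq (l : Multiset (ZMod n))) :
    Function.Injective (fun i : Fin n => (l.take ((i : ℕ) + 1)).sum) := by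
  have key : ∀ i j : Fin n, (i : ℕ) < (j : ℕ) →
      (l.take ((i : ℕ) + 1)).sum ≠ (l.take ((j : ℕ) + 1)).sum := by
    intro i j hij heq
    set m : List (ZMod n) := (l.drop ((i : ℕ) + 1)).take ((j : ℕ) - i) with hm
    -- decompose take (j+1) as take (i+1) ++ m
    have hdecomp : l.take ((j : ℕ) + 1) = l.take ((i : ℕ) + 1) ++ m := by
      have h1 : m = (l.take ((j : ℕ) + 1)).drop ((i : ℕ) + 1) := by
        have hn1 : (i : ℕ) + 1 + ((j : ℕ) - (i : ℕ)) = (j : ℕ) + 1 := by omega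
        rw [hm, List.take_drop, hn1]
      have h2 : (l.take ((j : ℕ) + 1)).take ((i : ℕ) + 1) = l.take ((i : ℕ) + 1) := by
        have hn2 : min ((i : ℕ) + 1) ((j : ℕ) + 1) = (i : ℕ) + 1 := by omega
        rw [List.take_take, hn2]
      rw [h1, ← h2, List.take_append_drop]
    have hsum : m.sum = 0 := by
      have h3 := heq
      rw [hdecomp, List.sum_append, left_eq_add] at h3
      exact h3
    have hmlen : m.length = (j : ℕ) - i := by
      rw [hm, List.length_take, List.length_drop, hl]
      omega
    have hsub : m.Sublist l := ((List.take_sublist _ _).trans (List.drop_sublist _ _))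
    have hle : (m : Multiset (ZMod n)) ≤ (l : Multiset (ZMod n)) :=
      Multiset.coe_le.mpr hsub.subperm
    have hne0 : (m : Multiset (ZMod n)) ≠ 0 := by
      intro h
      have : m.length = 0 := by
        have := congrArg Multiset.card h
        simpa using this
      omega
    have hneS : (m : Multiset (ZMod n)) ≠ (l : Multiset (ZMod n)) := by
      intro h
      have := congrArg Multiset.card h
      simp only [Multiset.coe_card] at this
      omega
    exact hmin.2.2 _ hle hne0 hneS (by simpa using hsum)
  intro i j h
  rcases lt_trichotomy (i : ℕ) (j : ℕ) with hlt | heq | hgt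
  · exact absurd h (key i j hlt)
  · exact Fin.ext heq
  · exact absurd h.symm (key j i hgt)

lemma partial_bij {n : ℕ} (hn : 0 < n) (l : List (ZMod n)) (hl : l.length = n)
    (hmin : IsMinZeroSumSeq (l : Multiset (ZMod n))) :
    Function.Bijective (fun i : Fin n => (l.take ((i : ℕ) + 1)).sum) := by
  haveI : NeZero n := ⟨hn.ne'⟩
  have hcard : Fintype.card (Fin n) = Fintype.card (ZMod n) := by
    simp [ZMod.card]
  exact (Fintype.bijective_iff_injective_and_card _).mpr
    ⟨partial_inj hn l hl hmin, hcard⟩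

lemma pair_eq {n : ℕ} (hn : 0 < n) (S : Multiset (ZMod n))
    (hS : IsMinZeroSumSeq S) (hcard : S.card = n)
    (a b : ZMod n) (t : Multiset (ZMod n)) (h : S = a ::ₘ b ::ₘ t) : a = b := by
  haveI : NeZero n := ⟨hn.ne'⟩
  set l : List (ZMod n) := a :: b :: t.toList with hldef
  set l' : List (ZMod n) := b :: a :: t.toList with hl'def
  have hcoel : (l : Multiset (ZMod n)) = S := by
    rw [hldef, h, ← Multiset.cons_coe, ← Multiset.cons_coe, Multiset.coe_toList]
  have hcoel' : (l' : Multiset (ZMod n)) = S := by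
    rw [hl'def, h, ← Multiset.cons_coe, ← Multiset.cons_coe, Multiset.coe_toList,
      Multiset.cons_swap]
  have hlen : l.length = n := by
    have h1 := congrArg Multiset.card hcoel
    simp only [Multiset.coe_card] at h1
    rw [h1, hcard]
  have hlen' : l'.length = n := by
    have h1 : l'.length = l.length := by simp [hldef, hl'def]
    rw [h1, hlen]
  have hminl : IsMinZeroSumSeq (l : Multiset (ZMod n)) := hcoel ▸ hS
  have hminl' : IsMinZeroSumSeq (l' : Multiset (ZMod n)) := hcoel' ▸ hS
  have hbij := partial_bij hn l hlen hminl
  have hbij' := partial_bij hn l' hlen' hminl'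
  -- partial sums agree for indices ≥ 1
  have hagree : ∀ i : Fin n, (i : ℕ) ≠ 0 →
      (l.take ((i : ℕ) + 1)).sum = (l'.take ((i : ℕ) + 1)).sum := by
    intro i hi
    obtain ⟨k, hk⟩ : ∃ k, (i : ℕ) + 1 = k + 2 := ⟨(i : ℕ) - 1, by omega⟩
    rw [hk]
    simp only [hldef, hl'def, List.take_succ_cons, List.sum_cons]
    ring
  obtain ⟨i, hi⟩ := hbij.2 (l'.take 1).sum
  simp only at hi
  by_cases hi0 : (i : ℕ) = 0
  · have h4 : (l.take ((i : ℕ) + 1)).sum = (l.take 1).sum := by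
      rw [hi0]
    have hab : (l.take 1).sum = (l'.take 1).sum := h4 ▸ hi
    simpa [hldef, hl'def] using hab
  · exfalso
    have h1 : (l'.take ((i : ℕ) + 1)).sum = (l'.take 1).sum := (hagree i hi0) ▸ hi
    have h2 : (l'.take (((⟨0, hn⟩ : Fin n) : ℕ) + 1)).sum = (l'.take 1).sum := rfl
    have h3 := hbij'.1 (a₁ := i) (a₂ := ⟨0, hn⟩) (by simpa using h1.trans h2.symm)
    apply hi0
    rw [h3]

/-- A sequence over `C_n` is a minimal zero-sum sequence of maximal length `n` iff it is
`e^n` for a generator `e`. -/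
theorem stmt_1 (n : ℕ) (hn : 0 < n) (S : Multiset (ZMod n)) :
    (IsMinZeroSumSeq S ∧ S.card = n) ↔
      ∃ e : ZMod n, addOrderOf e = n ∧ S = Multiset.replicate n e := by
  haveI : NeZero n := ⟨hn.ne'⟩
  constructor
  · rintro ⟨hS, hcard⟩
    obtain ⟨a, ha⟩ := Multiset.exists_mem_of_ne_zero hS.1
    have hrep : S = Multiset.replicate n a := by
      rw [Multiset.eq_replicate]
      refine ⟨hcard, fun b hb => ?_⟩
      by_cases hba : b = a
      · exact hba
      · have hb' : b ∈ S.erase a := Multiset.mem_erase_of_ne hba |>.mpr hb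
        have h1 : S = a ::ₘ S.erase a := (Multiset.cons_erase ha).symm
        have h2 : S.erase a = b ::ₘ (S.erase a).erase b := (Multiset.cons_erase hb').symm
        exact (pair_eq hn S hS hcard a b _ (by rw [h1, h2])).symm
    have hsum : n • a = 0 := by
      have := hS.2.1
      rwa [hrep, Multiset.sum_replicate] at this
    have hdvd : addOrderOf a ∣ n := addOrderOf_dvd_of_nsmul_eq_zero hsum
    have hpos : 0 < addOrderOf a := addOrderOf_pos a
    have horder : addOrderOf a = n := by
      by_contra hne
      have hlt : addOrderOf a < n := lt_of_le_of_ne (Nat.le_of_dvd hn hdvd) hne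
      refine hS.2.2 (Multiset.replicate (addOrderOf a) a) ?_ ?_ ?_ ?_
      · rw [hrep]
        exact Multiset.replicate_mono a hlt.le
      · intro h
        have hc := congrArg Multiset.card h
        simp only [Multiset.card_replicate, Multiset.card_zero] at hc
        omega
      · intro h
        have hc := congrArg Multiset.card h
        simp only [Multiset.card_replicate, hcard] at hc
        omega
      · rw [Multiset.sum_replicate]
        exact addOrderOf_nsmul_eq_zero a
    exact ⟨a, horder, hrep⟩
  · rintro ⟨e, he, rfl⟩
    refine ⟨⟨?_, ?_, ?_⟩, Multiset.card_replicate _ _⟩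
    · intro h
      have hc := congrArg Multiset.card h
      simp only [Multiset.card_replicate, Multiset.card_zero] at hc
      omega
    · rw [Multiset.sum_replicate]
      have h1 := addOrderOf_nsmul_eq_zero e
      rwa [he] at h1
    · intro T hT hT0 hTS
      obtain ⟨k, hkn, rfl⟩ := Multiset.le_replicate_iff.mp hT
      have hk0 : k ≠ 0 := by
        intro h
        exact hT0 (by simp [h])
      have hklt : k < n := by
        rcases lt_or_eq_of_le hkn with h | h
        · exact h
        · exact absurd (by rw [h]) hTS
      rw [Multiset.sum_replicate]
      intro hzero
      have : addOrderOf e ∣ k := addOrderOf_dvd_of_nsmul_eq_zero hzero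
      rw [he] at this
      have := Nat.le_of_dvd (Nat.pos_of_ne_zero hk0) this
      omega
end

section
/- Let G ≅ C_m ⊕ C_{mn} with m ≥ 2, and let {e₁, e₂} be a basis of G with ord(e₂) = mn. Fix {j,k} = {1,2} and nonnegative integers x₁, …, x_{ord(e_k)} with x₁ + ⋯ + x_{ord(e_k)} ≡ −1 (mod ord(e_j)). Then the sequence S = e_j^{ord(e_j)−1} · ∏_{i=1}^{ord(e_k)} (−x_i e_j + e_k) is a minimal zero-sum sequence over G of length m + mn − 1. -/
/-- `{e₁, e₂}` is a basis: independent elements generating the group. -/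
def IsBasisPair {G : Type*} [AddCommGroup G] (e1 e2 : G) : Prop :=
  AddSubgroup.closure {e1, e2} = ⊤ ∧
  ∀ a b : ℤ, a • e1 + b • e2 = 0 → a • e1 = 0 ∧ b • e2 = 0

private lemma aux_modsmul {G : Type*} [AddCommGroup G] (e : G) (c : ℤ) :
    (c % (addOrderOf e : ℤ)) • e = c • e := by
  have hdvd : ((addOrderOf e : ℤ)) ∣ (c - c % (addOrderOf e : ℤ)) :=
    ⟨c / (addOrderOf e : ℤ), by
      have := Int.emod_def c (addOrderOf e : ℤ); linarith⟩
  have hz : (c - c % (addOrderOf e : ℤ)) • e = 0 := addOrderOf_dvd_iff_zsmul_eq_zero.mp hdvd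
  rw [sub_smul, sub_eq_zero] at hz
  exact hz.symm

private lemma aux_card {G : Type*} [AddCommGroup G] [Finite G] (e1 e2 : G)
    (hgen : AddSubgroup.closure ({e1, e2} : Set G) = ⊤)
    (hind : ∀ a b : ℤ, a • e1 + b • e2 = 0 → a • e1 = 0 ∧ b • e2 = 0) :
    Nat.card G = addOrderOf e1 * addOrderOf e2 := by
  have h1 : 0 < addOrderOf e1 := addOrderOf_pos e1
  have h2 : 0 < addOrderOf e2 := addOrderOf_pos e2
  haveI : NeZero (addOrderOf e1) := ⟨h1.ne'⟩
  haveI : NeZero (addOrderOf e2) := ⟨h2.ne'⟩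
  have hbij : Function.Bijective
      (fun p : ZMod (addOrderOf e1) × ZMod (addOrderOf e2) =>
        ((p.1.val : ℤ) • e1 + (p.2.val : ℤ) • e2 : G)) := by
    constructor
    · rintro ⟨a, b⟩ ⟨a', b'⟩ h
      simp only at h
      have hz : ((a.val : ℤ) - (a'.val : ℤ)) • e1 + ((b.val : ℤ) - (b'.val : ℤ)) • e2 = 0 := by
        rw [sub_smul, sub_smul]
        linear_combination (norm := abel) h
      obtain ⟨hz1, hz2⟩ := hind _ _ hz
      have hd1 := addOrderOf_dvd_iff_zsmul_eq_zero.mpr hz1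
      have hd2 := addOrderOf_dvd_iff_zsmul_eq_zero.mpr hz2
      have hva : a.val = a'.val := by
        have l1 := a.val_lt; have l2 := a'.val_lt
        have := Int.eq_zero_of_abs_lt_dvd hd1 (by rw [abs_sub_lt_iff]; constructor <;> push_cast <;> omega)
        omega
      have hvb : b.val = b'.val := by
        have l1 := b.val_lt; have l2 := b'.val_lt
        have := Int.eq_zero_of_abs_lt_dvd hd2 (by rw [abs_sub_lt_iff]; constructor <;> push_cast <;> omega)
        omega
      have hae : a = a' := by
        have := congrArg (fun t : ℕ => (t : ZMod (addOrderOf e1))) hva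
        simpa [ZMod.natCast_val, ZMod.cast_id] using this
      have hbe : b = b' := by
        have := congrArg (fun t : ℕ => (t : ZMod (addOrderOf e2))) hvb
        simpa [ZMod.natCast_val, ZMod.cast_id] using this
      exact Prod.ext hae hbe
    · intro g
      have : g ∈ AddSubgroup.closure ({e1, e2} : Set G) := by rw [hgen]; trivial
      obtain ⟨c, d, hcd⟩ := AddSubgroup.mem_closure_pair.mp this
      refine ⟨⟨(c : ZMod (addOrderOf e1)), (d : ZMod (addOrderOf e2))⟩, ?_⟩
      simp only
      rw [ZMod.val_intCast c, ZMod.val_intCast d, aux_modsmul, aux_modsmul, hcd]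
  have := Nat.card_eq_of_bijective _ hbij
  rw [Nat.card_prod, Nat.card_zmod, Nat.card_zmod] at this
  omega

/-- The sequences of type (1) are minimal zero-sum sequences of length `m + mn - 1`. -/
theorem stmt_3 (m n : ℕ) (hm : 2 ≤ m) (hn : 0 < n)
    (G : Type*) [AddCommGroup G] (hG : Nonempty (G ≃+ ZMod m × ZMod (m * n)))
    (e1 e2 : G) (hbasis : IsBasisPair e1 e2) (he2 : addOrderOf e2 = m * n)
    (ej ek : G) (hjk : (ej, ek) = (e1, e2) ∨ (ej, ek) = (e2, e1))
    (x : Fin (addOrderOf ek) → ℕ)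
    (hx : (∑ i, (x i : ℤ)) ≡ -1 [ZMOD (addOrderOf ej)]) :
    IsMinZeroSumSeq (Multiset.replicate (addOrderOf ej - 1) ej +
      Multiset.map (fun i => -(x i : ℤ) • ej + ek) Finset.univ.val) ∧
    (Multiset.replicate (addOrderOf ej - 1) ej +
      Multiset.map (fun i => -(x i : ℤ) • ej + ek) Finset.univ.val).card
      = m + m * n - 1 := by
  classical
  obtain ⟨φ⟩ := hG
  have hmn : 0 < m * n := Nat.mul_pos (by omega) hn
  haveI : NeZero m := ⟨by omega⟩
  haveI : NeZero (m * n) := ⟨hmn.ne'⟩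
  haveI : Finite G := Finite.of_equiv _ φ.toEquiv.symm
  have hcardG : Nat.card G = m * (m * n) := by
    rw [Nat.card_congr φ.toEquiv, Nat.card_prod, Nat.card_zmod, Nat.card_zmod]
  have he1 : addOrderOf e1 = m := by
    have := aux_card e1 e2 hbasis.1 hbasis.2
    rw [he2, hcardG] at this
    exact Nat.eq_of_mul_eq_mul_right hmn this.symm
  have hcase : (addOrderOf ej = m ∧ addOrderOf ek = m * n) ∨
      (addOrderOf ej = m * n ∧ addOrderOf ek = m) := by
    rcases hjk with h | h <;> rw [Prod.ext_iff] at h <;> obtain ⟨h1, h2⟩ := h <;>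
      subst h1 <;> subst h2
    · exact Or.inl ⟨he1, he2⟩
    · exact Or.inr ⟨he2, he1⟩
  have ha2 : 2 ≤ addOrderOf ej := by rcases hcase with ⟨h, _⟩ | ⟨h, _⟩ <;> nlinarith
  have hb2 : 2 ≤ addOrderOf ek := by rcases hcase with ⟨_, h⟩ | ⟨_, h⟩ <;> nlinarith
  have hsplit : ∀ c d : ℤ, c • ej + d • ek = 0 → c • ej = 0 ∧ d • ek = 0 := by
    rcases hjk with h | h <;> rw [Prod.ext_iff] at h <;> obtain ⟨h1, h2⟩ := h <;>
      subst h1 <;> subst h2 <;> intro c d hcd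
    · exact hbasis.2 c d hcd
    · exact (hbasis.2 d c (by rwa [add_comm])).symm
  set A : Multiset G := Multiset.replicate (addOrderOf ej - 1) ej with hA
  set B : Multiset G := Multiset.map (fun i => -(x i : ℤ) • ej + ek) Finset.univ.val with hB
  have hcardB : Multiset.card B = addOrderOf ek := by simp [hB]
  have hcardA : Multiset.card A = addOrderOf ej - 1 := by simp [hA]
  have hBsum : B.sum = (-(∑ i, (x i : ℤ))) • ej := by
    have h0 : B.sum = ∑ i, (-(x i : ℤ) • ej + ek) := rfl
    rw [h0, Finset.sum_add_distrib, Finset.sum_const, Finset.card_univ, Fintype.card_fin,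
      addOrderOf_nsmul_eq_zero ek, add_zero, ← Finset.sum_neg_distrib, Finset.sum_smul]
  have hxdvd : ((addOrderOf ej : ℤ)) ∣ (∑ i, (x i : ℤ)) + 1 := by
    have h := hx.dvd
    rw [show (-1 - ∑ i, (x i : ℤ)) = -((∑ i, (x i : ℤ)) + 1) by ring] at h
    exact dvd_neg.mp h
  have hAsum : A.sum = ((addOrderOf ej : ℤ) - 1) • ej := by
    rw [hA, Multiset.sum_replicate, ← Nat.cast_smul_eq_nsmul ℤ]
    congr 1
    omega
  have key : ∀ T2 : Multiset G, (∀ g ∈ T2, ∃ i, g = -(x i : ℤ) • ej + ek) →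
      ∃ σ : ℕ, T2.sum = (-(σ : ℤ)) • ej + (Multiset.card T2 : ℤ) • ek := by
    intro T2
    induction T2 using Multiset.induction_on with
    | empty => intro _; exact ⟨0, by simp⟩
    | cons g T2 ih =>
      intro h
      obtain ⟨σ, hσ⟩ := ih (fun g' hg' => h g' (Multiset.mem_cons_of_mem hg'))
      obtain ⟨i, hi⟩ := h g (Multiset.mem_cons_self g T2)
      refine ⟨x i + σ, ?_⟩
      rw [Multiset.sum_cons, hσ, hi, Multiset.card_cons]
      push_cast
      module
  constructor
  · refine ⟨?_, ?_, ?_⟩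
    · intro h0
      have := congrArg Multiset.card h0
      rw [Multiset.card_add, hcardB, hcardA] at this
      simp at this
      omega
    · rw [Multiset.sum_add, hAsum, hBsum, ← add_smul]
      apply addOrderOf_dvd_iff_zsmul_eq_zero.mp
      obtain ⟨k, hk⟩ := hxdvd
      exact ⟨1 - k, by rw [mul_sub, mul_one]; push_cast; linarith⟩
    · intro T hTle hT0 hTS hTsum
      have hT2le : T - A ≤ B := by
        rw [Multiset.sub_le_iff_le_add]
        rwa [add_comm] at hTle
      have hT1le : T ∩ A ≤ A := Multiset.inter_le_right
      have hTeq : T = T ∩ A + (T - A) := by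
        ext g
        rw [Multiset.count_add, Multiset.count_inter, Multiset.count_sub]
        have h := Multiset.le_iff_count.mp hTle g
        rw [Multiset.count_add] at h
        omega
      obtain ⟨r, hr, hT1⟩ := Multiset.le_replicate_iff.mp hT1le
      obtain ⟨σ, hσ⟩ := key (T - A) (fun g hg => by
        have h := Multiset.mem_of_le hT2le hg
        rw [hB, Multiset.mem_map] at h
        obtain ⟨i, _, hi⟩ := h
        exact ⟨i, hi.symm⟩)
      set d := Multiset.card (T - A) with hd
      have hdb : d ≤ addOrderOf ek := by rw [hd, ← hcardB]; exact Multiset.card_mono hT2le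
      have hsum0 : T.sum = (Multiset.replicate r ej).sum + (T - A).sum := by
        rw [← hT1, ← Multiset.sum_add, ← hTeq]
      have hTsum' : ((r : ℤ) - σ) • ej + (d : ℤ) • ek = 0 := by
        rw [hTsum, Multiset.sum_replicate, hσ, ← Nat.cast_smul_eq_nsmul ℤ r ej] at hsum0
        rw [sub_smul]
        linear_combination (norm := module) -hsum0
      obtain ⟨hz1, hz2⟩ := hsplit _ _ hTsum'
      have hbd : addOrderOf ek ∣ d := by
        have h := addOrderOf_dvd_iff_zsmul_eq_zero.mpr hz2
        exact_mod_cast h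
      have hd0b : d = 0 ∨ d = addOrderOf ek := by
        rcases Nat.eq_zero_or_pos d with h | h
        · exact Or.inl h
        · exact Or.inr (Nat.le_antisymm hdb (Nat.le_of_dvd h hbd))
      rcases hd0b with h | h
      · have hT20 : T - A = 0 := Multiset.card_eq_zero.mp h
        rw [hT20, add_zero, hT1] at hTeq
        rw [hTeq, Multiset.sum_replicate] at hTsum
        have hdvd : addOrderOf ej ∣ r := addOrderOf_dvd_iff_nsmul_eq_zero.mpr hTsum
        have hr0 : r = 0 := Nat.eq_zero_of_dvd_of_lt hdvd (by omega)
        exact hT0 (by rw [hTeq, hr0, Multiset.replicate_zero])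
      · have hT2B : T - A = B := Multiset.eq_of_le_of_card_le hT2le (by omega)
        have hTsum2 : ((r : ℤ) - ∑ i, (x i : ℤ)) • ej = 0 := by
          rw [hT2B, hTsum, Multiset.sum_replicate, hBsum,
            ← Nat.cast_smul_eq_nsmul ℤ r ej] at hsum0
          rw [sub_smul]
          linear_combination (norm := module) -hsum0
        have hadvd : ((addOrderOf ej : ℤ)) ∣ ((r : ℤ) - ∑ i, (x i : ℤ)) :=
          addOrderOf_dvd_iff_zsmul_eq_zero.mpr hTsum2
        have hra : r = addOrderOf ej - 1 := by
          have hsum := dvd_add hadvd hxdvd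
          rw [show ((r : ℤ) - ∑ i, (x i : ℤ)) + ((∑ i, (x i : ℤ)) + 1) = (r : ℤ) + 1 by ring]
            at hsum
          have hnat : addOrderOf ej ∣ r + 1 := by exact_mod_cast hsum
          have := Nat.le_of_dvd (by omega) hnat
          omega
        exact hTS (by rw [hTeq, hT2B, hT1, hra])
  · rw [Multiset.card_add, hcardA, hcardB]
    rcases hcase with ⟨h1, h2⟩ | ⟨h1, h2⟩ <;> omega
end

section
/- Let G ≅ C_m ⊕ C_{mn} with m ≥ 2 and n ≥ 1, let s ∈ [1,n], and let {g₁, g₂} be a generating set of G with ord(g₂) = mn and, if s ≠ 1, m g₁ = m g₂. Let x₁, …, x_{(n+1−s)m} be nonnegative integers with x₁ + ⋯ + x_{(n+1−s)m} = m − 1. Then S = g₁^{sm−1} · ∏_{i=1}^{(n+1−s)m} (−x_i g₁ + g₂) is a minimal zero-sum sequence over G of length m + mn − 1. -/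
theorem exists_le_map' {α β : Type*} {f : α → β} :
    ∀ (s : Multiset α) (t : Multiset β), t ≤ s.map f → ∃ u ≤ s, t = u.map f := by
  classical
  intro s
  induction s using Multiset.induction with
  | empty =>
    intro t ht
    rw [Multiset.map_zero, Multiset.le_zero] at ht
    exact ⟨0, le_refl _, by simp [ht]⟩
  | cons a s ih =>
    intro t ht
    rw [Multiset.map_cons] at ht
    by_cases hfa : f a ∈ t
    · have h1 : t.erase (f a) ≤ Multiset.map f s := by
        have h2 := Multiset.erase_le_erase (f a) ht
        rwa [Multiset.erase_cons_head] at h2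
      obtain ⟨u, hu, htu⟩ := ih _ h1
      refine ⟨a ::ₘ u, Multiset.cons_le_cons a hu, ?_⟩
      rw [Multiset.map_cons, ← htu, Multiset.cons_erase hfa]
    · have h1 : t ≤ Multiset.map f s := (Multiset.le_cons_of_notMem hfa).mp ht
      obtain ⟨u, hu, htu⟩ := ih _ h1
      exact ⟨u, le_trans hu (Multiset.le_cons_self s a), htu⟩

set_option maxHeartbeats 1000000 in
/-- The sequences of type (2) are minimal zero-sum sequences of length `m + mn - 1`. -/
theorem stmt_4 (m n s : ℕ) (hm : 2 ≤ m) (hn : 1 ≤ n) (hs1 : 1 ≤ s) (hsn : s ≤ n)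
    (G : Type*) [AddCommGroup G] (hG : Nonempty (G ≃+ ZMod m × ZMod (m * n)))
    (g1 g2 : G) (hgen : AddSubgroup.closure {g1, g2} = ⊤)
    (hg2 : addOrderOf g2 = m * n) (hs : s ≠ 1 → m • g1 = m • g2)
    (x : Fin ((n + 1 - s) * m) → ℕ) (hx : (∑ i, x i) = m - 1) :
    IsMinZeroSumSeq (Multiset.replicate (s * m - 1) g1 +
      Multiset.map (fun i => -(x i : ℤ) • g1 + g2) Finset.univ.val) ∧
    (Multiset.replicate (s * m - 1) g1 +
      Multiset.map (fun i => -(x i : ℤ) • g1 + g2) Finset.univ.val).card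
      = m + m * n - 1 := by
  classical
  obtain ⟨e⟩ := hG
  have hm0 : 0 < m := by omega
  have hmn0 : 0 < m * n := Nat.mul_pos hm0 hn
  have hsm1 : m ≤ s * m := Nat.le_mul_of_pos_left m (by omega)
  have hsmn : s * m ≤ n * m := Nat.mul_le_mul_right m hsn
  have hNval : (n + 1 - s) * m = n * m + m - s * m := by
    rw [Nat.sub_mul, Nat.add_mul, one_mul]
  -- cardinality facts
  have hcardG : Nat.card G = m * (m * n) := by
    rw [Nat.card_congr e.toEquiv, Nat.card_prod, Nat.card_zmod, Nat.card_zmod]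
  set H := AddSubgroup.zmultiples g2 with hH
  have hcardH : Nat.card H = m * n := by rw [hH, Nat.card_zmultiples, hg2]
  have hcardQ : Nat.card (G ⧸ H) = m := by
    have h1 := AddSubgroup.card_eq_card_quotient_mul_card_addSubgroup H
    rw [hcardG, hcardH] at h1
    exact (Nat.eq_of_mul_eq_mul_right hmn0 h1.symm)
  -- key divisibility: if c • g1 ∈ ⟨g2⟩ then m ∣ c
  have hπ : ∀ c : ℤ, c • g1 ∈ H → (m : ℤ) ∣ c := by
    intro c hc
    set π := QuotientAddGroup.mk' H with hπdef
    have hsurj : Function.Surjective π := QuotientAddGroup.mk'_surjective H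
    have htop : AddSubgroup.zmultiples (π g1) = ⊤ := by
      have h1 : AddSubgroup.closure (π '' {g1, g2}) = ⊤ := by
        rw [← AddMonoidHom.map_closure, hgen, AddSubgroup.map_top_of_surjective _ hsurj]
      rw [Set.image_insert_eq, Set.image_singleton] at h1
      have hg2' : π g2 = 0 := (QuotientAddGroup.eq_zero_iff g2).mpr (AddSubgroup.mem_zmultiples g2)
      rw [hg2'] at h1
      rw [AddSubgroup.zmultiples_eq_closure]
      refine le_antisymm le_top ?_
      rw [← h1, AddSubgroup.closure_le]
      intro z hz
      rcases hz with hz | hz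
      · exact hz ▸ AddSubgroup.subset_closure (Set.mem_singleton _)
      · rw [Set.mem_singleton_iff] at hz
        rw [hz]
        exact zero_mem _
    have hord : addOrderOf (π g1) = m := by
      rw [← Nat.card_zmultiples, htop, ← hcardQ]
      exact Nat.card_congr AddSubgroup.topEquiv.toEquiv
    have hz : c • (π g1) = 0 := by
      have h2 := (QuotientAddGroup.eq_zero_iff (c • g1)).mpr hc
      rw [← map_zsmul π c g1]
      exact h2
    rw [← hord]
    exact addOrderOf_dvd_iff_zsmul_eq_zero.mpr hz
  have hg2z : ∀ j : ℤ, j • g2 = 0 ↔ ((m * n : ℕ) : ℤ) ∣ j := by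
    intro j
    rw [← hg2]
    exact addOrderOf_dvd_iff_zsmul_eq_zero.symm
  -- sum computation helper
  have hsum_eq : ∀ (a : ℕ) (J : Finset (Fin ((n + 1 - s) * m))),
      (Multiset.replicate a g1 +
        Multiset.map (fun i => -(x i : ℤ) • g1 + g2) J.val).sum
        = ((a : ℤ) - ∑ i ∈ J, (x i : ℤ)) • g1 + (J.card : ℤ) • g2 := by
    intro a J
    rw [Multiset.sum_add, Multiset.sum_replicate]
    have h1 : (Multiset.map (fun i => -(x i : ℤ) • g1 + g2) J.val).sum
        = ∑ i ∈ J, (-(x i : ℤ) • g1 + g2) := rfl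
    rw [h1, Finset.sum_add_distrib, ← Finset.sum_smul, Finset.sum_neg_distrib,
      Finset.sum_const, ← natCast_zsmul g1 a, ← natCast_zsmul g2 J.card, neg_smul, sub_smul]
    abel
  -- the m • g1 = m • g2 relation as ℤ-smul
  have hswap : ∀ c : ℤ, (m : ℤ) ∣ c → s ≠ 1 → c • g1 = c • g2 := by
    intro c hdvd hs'
    obtain ⟨k, hk⟩ := hdvd
    have hmg : (m : ℤ) • g1 = (m : ℤ) • g2 := by
      rw [natCast_zsmul, natCast_zsmul]; exact hs hs'
    rw [hk, mul_comm, mul_smul, mul_smul, hmg]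
  have hcastsum : ((m - 1 : ℕ) : ℤ) = ∑ i, (x i : ℤ) := by
    rw [← hx]; push_cast; rfl
  have hNcard : (Finset.univ : Finset (Fin ((n + 1 - s) * m))).card = (n + 1 - s) * m := by
    rw [Finset.card_univ, Fintype.card_fin]
  refine ⟨⟨?_, ?_, ?_⟩, ?_⟩
  · -- S ≠ 0
    intro h0
    have h1 := congrArg Multiset.card h0
    rw [Multiset.card_add, Multiset.card_replicate, Multiset.card_zero] at h1
    omega
  · -- S.sum = 0
    have h1 := hsum_eq (s * m - 1) Finset.univ
    rw [h1, hNcard, ← hcastsum]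
    have hc1 : ((s * m - 1 : ℕ) : ℤ) - ((m - 1 : ℕ) : ℤ) = ((s : ℤ) - 1) * m := by
      have : (1 : ℕ) ≤ s * m := by omega
      push_cast [this, hm0.le]
      push_cast [Nat.cast_sub this, Nat.cast_sub (by omega : 1 ≤ m)]
      ring
    rw [hc1]
    by_cases hs' : s = 1
    · subst hs'
      simp only [Nat.cast_one, sub_self, zero_mul, zero_smul, zero_add]
      rw [hg2z]
      have : (n + 1 - 1) * m = m * n := by rw [Nat.add_sub_cancel, Nat.mul_comm]
      rw [this]
    · rw [hswap _ ⟨(s : ℤ) - 1, mul_comm _ _⟩ hs', ← add_smul, hg2z]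
      have h2 : ((s : ℤ) - 1) * m + ((n + 1 - s) * m : ℕ) = ((m * n : ℕ) : ℤ) := by
        have h3 : (s - 1) * m + (n + 1 - s) * m = m * n := by
          rw [← Nat.add_mul]
          have : s - 1 + (n + 1 - s) = n := by omega
          rw [this, Nat.mul_comm]
        have h4 := congrArg (Nat.cast : ℕ → ℤ) h3
        push_cast [Nat.cast_sub hs1] at h4
        push_cast
        linarith
      rw [h2]
  · -- minimality
    rintro T hTle hT0 hTS hsum0
    set R := Multiset.replicate (s * m - 1) g1 with hR
    set M := Multiset.map (fun i => -(x i : ℤ) • g1 + g2) Finset.univ.val with hM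
    have hdec : T = (T ∩ R) + (T - R) := by
      ext b
      rw [Multiset.count_add, Multiset.count_inter, Multiset.count_sub]
      omega
    have hA : T ∩ R ≤ R := Multiset.inter_le_right
    have hB : T - R ≤ M := by
      rw [Multiset.sub_le_iff_le_add]
      rwa [add_comm R M] at hTle
    obtain ⟨u, hu, hTB⟩ := exists_le_map' _ _ hB
    have hnd : u.Nodup := Multiset.nodup_of_le hu Finset.univ.nodup
    set J : Finset (Fin ((n + 1 - s) * m)) := ⟨u, hnd⟩ with hJ
    set a := Multiset.card (T ∩ R) with ha
    have hAa : T ∩ R = Multiset.replicate a g1 :=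
      Multiset.eq_replicate_card.mpr
        (fun b hb => Multiset.eq_of_mem_replicate (Multiset.mem_of_le hA hb))
    have haub : a ≤ s * m - 1 := by
      have h1 := Multiset.card_le_card hA
      rwa [Multiset.card_replicate] at h1
    -- exclusion facts
    have hT0' : a = 0 → J = ∅ → False := by
      intro h1 h2
      apply hT0
      rw [hdec, hAa, h1, hTB, Multiset.replicate_zero, zero_add]
      have : u = 0 := by
        have := congrArg Finset.val h2
        exact this
      rw [this, Multiset.map_zero]
    have hTS' : a = s * m - 1 → J = Finset.univ → False := by
      intro h1 h2
      apply hTS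
      rw [hdec, hAa, h1, hTB]
      have : u = Finset.univ.val := congrArg Finset.val h2
      rw [this]
    -- compute the sum
    have hTsum : ((a : ℤ) - ∑ i ∈ J, (x i : ℤ)) • g1 + (J.card : ℤ) • g2 = 0 := by
      rw [← hsum_eq a J]
      rw [← hsum0, hdec, hAa, hTB]
    set X : ℤ := ∑ i ∈ J, (x i : ℤ) with hXdef
    have hX0 : 0 ≤ X := Finset.sum_nonneg (fun i _ => Int.natCast_nonneg _)
    have hXm : X ≤ (m : ℤ) - 1 := by
      have h1 : (∑ i ∈ J, x i) ≤ m - 1 := by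
        rw [← hx]
        exact Finset.sum_le_sum_of_subset (Finset.subset_univ J)
      have h2 : X = ((∑ i ∈ J, x i : ℕ) : ℤ) := by push_cast; rfl
      rw [h2]
      have h3 : ((∑ i ∈ J, x i : ℕ) : ℤ) ≤ ((m - 1 : ℕ) : ℤ) := Nat.cast_le.mpr h1
      have h4 : ((m - 1 : ℕ) : ℤ) = (m : ℤ) - 1 := by
        push_cast [Nat.cast_sub (by omega : 1 ≤ m)]; ring
      linarith
    have hJcle : J.card ≤ (n + 1 - s) * m := by
      have h1 := Finset.card_le_univ J
      rwa [Fintype.card_fin] at h1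
    have haz : (0 : ℤ) ≤ (a : ℤ) := Int.natCast_nonneg a
    have hazu : (a : ℤ) ≤ (s : ℤ) * m - 1 := by
      have h1 : ((a : ℕ) : ℤ) ≤ ((s * m - 1 : ℕ) : ℤ) := Nat.cast_le.mpr haub
      have h2 : ((s * m - 1 : ℕ) : ℤ) = (s : ℤ) * m - 1 := by
        push_cast [Nat.cast_sub (by omega : 1 ≤ s * m)]; ring
      linarith
    -- m divides a - X
    have hdvd : (m : ℤ) ∣ ((a : ℤ) - X) := by
      apply hπ
      rw [AddSubgroup.mem_zmultiples_iff]
      refine ⟨-(J.card : ℤ), ?_⟩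
      rw [neg_smul]
      have := add_eq_zero_iff_eq_neg.mp hTsum
      exact this.symm
    -- key fact: if a - X = 0 then J.card = 0 or J.card = m * n
    have hJX : X = ∑ i ∈ J, (x i : ℤ) := rfl
    -- case analysis
    by_cases hs' : s = 1
    · -- here a ≤ m - 1, so |a - X| < m, hence a = X
      have haX : (a : ℤ) - X = 0 := by
        obtain ⟨k, hk⟩ := hdvd
        have h1 : (a : ℤ) ≤ (m : ℤ) - 1 := by
          rw [hs'] at hazu; push_cast at hazu; linarith
        have h2 : -((m : ℤ)) < (m : ℤ) * k := by rw [← hk]; linarith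
        have h3 : (m : ℤ) * k < m := by rw [← hk]; linarith
        have hk0 : k = 0 := by
          have hma : -1 < k := by
            have := lt_of_mul_lt_mul_left
              (show (m : ℤ) * (-1) < (m : ℤ) * k by linarith) (by positivity)
            linarith
          have hmb : k < 1 := by
            have := lt_of_mul_lt_mul_left
              (show (m : ℤ) * k < (m : ℤ) * 1 by linarith) (by positivity)
            linarith
          omega
        rw [hk, hk0, mul_zero]
      rw [haX, zero_smul, zero_add] at hTsum
      have hdvd2 : (m * n : ℕ) ∣ J.card := by
        have h1 := (hg2z _).mp hTsum
        exact_mod_cast h1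
      have hJle2 : J.card ≤ m * n := by
        have : (n + 1 - s) * m ≤ m * n := by
          rw [hs', Nat.add_sub_cancel, Nat.mul_comm]
        omega
      rcases Nat.eq_zero_or_pos J.card with h1 | h1
      · refine hT0' ?_ (Finset.card_eq_zero.mp h1)
        have : X = 0 := by
          rw [hJX, Finset.card_eq_zero.mp h1, Finset.sum_empty]
        omega
      · have h2 : J.card = m * n := Nat.le_antisymm hJle2 (Nat.le_of_dvd h1 hdvd2)
        have hJu : J = Finset.univ := by
          apply Finset.eq_univ_of_card
          rw [h2, Fintype.card_fin, hs', Nat.add_sub_cancel, Nat.mul_comm]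
        refine hTS' ?_ hJu
        have hXval : X = ((m - 1 : ℕ) : ℤ) := by rw [hJX, hJu, hcastsum]
        have : (a : ℤ) = ((m - 1 : ℕ) : ℤ) := by rw [← hXval]; linarith
        have h3 : a = m - 1 := Nat.cast_injective this
        rw [hs', one_mul]
        exact h3
    · -- s ≠ 1 : use m • g1 = m • g2
      have hcg : ((a : ℤ) - X) • g1 = ((a : ℤ) - X) • g2 := hswap _ hdvd hs'
      have hz2 : (((a : ℤ) - X) + J.card) • g2 = 0 := by
        rw [add_smul, ← hcg]
        exact hTsum
      have hdvd2 := (hg2z _).mp hz2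
      -- bounds: a - X ≤ (s-1) * m
      have hcle : (a : ℤ) - X ≤ ((s : ℤ) - 1) * m := by
        obtain ⟨k, hk⟩ := hdvd
        have h1 : (m : ℤ) * k ≤ (s : ℤ) * m - 1 := by rw [← hk]; linarith
        have hklt : k ≤ (s : ℤ) - 1 := by
          have := lt_of_mul_lt_mul_left
            (show (m : ℤ) * k < (m : ℤ) * s by linarith) (by positivity)
          omega
        have h2 : (m : ℤ) * k ≤ (m : ℤ) * ((s : ℤ) - 1) := by
          apply mul_le_mul_of_nonneg_left hklt (by positivity)
        rw [hk]; linarith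
      have hid : ((s : ℤ) - 1) * m + (((n + 1 - s) * m : ℕ) : ℤ) = ((m * n : ℕ) : ℤ) := by
        have h3 : (s - 1) * m + (n + 1 - s) * m = m * n := by
          rw [← Nat.add_mul]
          have : s - 1 + (n + 1 - s) = n := by omega
          rw [this, Nat.mul_comm]
        have h4 := congrArg (Nat.cast : ℕ → ℤ) h3
        push_cast [Nat.cast_sub hs1] at h4
        push_cast
        linarith
      obtain ⟨t, ht⟩ := hdvd2
      have hJcle' : ((J.card : ℕ) : ℤ) ≤ (((n + 1 - s) * m : ℕ) : ℤ) := Nat.cast_le.mpr hJcle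
      have hmn1 : (1 : ℤ) ≤ ((m * n : ℕ) : ℤ) := by exact_mod_cast hmn0
      have hmlemn : (m : ℤ) ≤ ((m * n : ℕ) : ℤ) := by
        have : m ≤ m * n := Nat.le_mul_of_pos_right m hn
        exact_mod_cast this
      have htval : t = 0 ∨ t = 1 := by
        have hlow : -((m * n : ℕ) : ℤ) < ((m * n : ℕ) : ℤ) * t := by
          have h3 : -((m : ℤ) - 1) ≤ (a : ℤ) - X + J.card := by
            have := Int.natCast_nonneg J.card
            linarith
          rw [ht] at h3
          linarith
        have hhigh : ((m * n : ℕ) : ℤ) * t ≤ ((m * n : ℕ) : ℤ) := by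
          have h3 : (a : ℤ) - X + J.card ≤ ((m * n : ℕ) : ℤ) := by linarith
          rw [ht] at h3
          linarith
        have h4 : -1 < t := by
          have := lt_of_mul_lt_mul_left
            (show ((m * n : ℕ) : ℤ) * (-1) < ((m * n : ℕ) : ℤ) * t by linarith) (by linarith)
          linarith
        have h5 : t ≤ 1 := by
          have := le_of_mul_le_mul_left
            (show ((m * n : ℕ) : ℤ) * t ≤ ((m * n : ℕ) : ℤ) * 1 by linarith) (by linarith)
          linarith
        omega
      rcases htval with h1 | h1
      · -- t = 0 : a - X + J.card = 0, forcing a - X = 0 and J.card = 0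
        rw [h1, mul_zero] at ht
        have hJ0 : (J.card : ℤ) = 0 := by
          obtain ⟨k, hk⟩ := hdvd
          have h2 : (m : ℤ) * k ≤ 0 := by
            have := Int.natCast_nonneg J.card
            rw [← hk]; linarith
          have h3 : -((m : ℤ)) < (m : ℤ) * k := by rw [← hk]; linarith
          have hk0 : k = 0 := by
            have hma : -1 < k := by
              have := lt_of_mul_lt_mul_left
                (show (m : ℤ) * (-1) < (m : ℤ) * k by linarith) (by positivity)
              linarith
            have hmb : k < 1 := by
              have := lt_of_mul_lt_mul_left
                (show (m : ℤ) * k < (m : ℤ) * 1 by linarith) (by positivity)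
              linarith
            omega
          rw [hk, hk0, mul_zero] at ht
          linarith
        have hJ0' : J.card = 0 := by exact_mod_cast hJ0
        refine hT0' ?_ (Finset.card_eq_zero.mp hJ0')
        have hX0' : X = 0 := by rw [hJX, Finset.card_eq_zero.mp hJ0', Finset.sum_empty]
        have : (a : ℤ) = 0 := by rw [hJ0] at ht; linarith
        exact_mod_cast this
      · -- t = 1 : a - X + J.card = m * n
        rw [h1, mul_one] at ht
        have hceq : (a : ℤ) - X = ((s : ℤ) - 1) * m ∧
            ((J.card : ℕ) : ℤ) = (((n + 1 - s) * m : ℕ) : ℤ) := by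
          constructor <;> linarith
        have hJu : J = Finset.univ := by
          apply Finset.eq_univ_of_card
          rw [Fintype.card_fin]
          exact_mod_cast hceq.2
        refine hTS' ?_ hJu
        have hXval : X = ((m - 1 : ℕ) : ℤ) := by rw [hJX, hJu, hcastsum]
        have h4 : ((m - 1 : ℕ) : ℤ) = (m : ℤ) - 1 := by
          push_cast [Nat.cast_sub (by omega : 1 ≤ m)]; ring
        have h5 : (a : ℤ) = (s : ℤ) * m - 1 := by
          have := hceq.1
          rw [hXval, h4] at this
          linarith
        have h6 : ((s * m - 1 : ℕ) : ℤ) = (s : ℤ) * m - 1 := by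
          push_cast [Nat.cast_sub (by omega : 1 ≤ s * m)]; ring
        have : ((a : ℕ) : ℤ) = ((s * m - 1 : ℕ) : ℤ) := by rw [h5, h6]
        exact_mod_cast this
  · -- cardinality
    rw [Multiset.card_add, Multiset.card_replicate, Multiset.card_map]
    have : Multiset.card (Finset.univ : Finset (Fin ((n + 1 - s) * m))).val
        = (n + 1 - s) * m := hNcard
    rw [this, hNval, Nat.mul_comm m n]
    omega
end

section
/- Let m ≥ 2, t ≥ 2, and let {f₁, f₂} be a basis of C_m². Let s ∈ [1, t−1] and a_1, …, a_{(t−s)m} ∈ [0, m−1] with Σ a_i ≡ 1 (mod m). Then S = f₁^{sm−1} ∏_{i=1}^{(t−s)m}(a_i f₁ + f₂) is a zero-sum sequence over C_m² of length tm − 1 that cannot be written as a product of t nonempty zero-sum sequences. -/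
/-- `S = f₁^{sm-1} ∏ (aᵢf₁+f₂)` with `Σaᵢ ≡ 1 (mod m)` is a zero-sum sequence of length
`tm - 1` over `C_m²` that is not a product of `t` nonempty zero-sum sequences. -/
theorem stmt_9 (m t s : ℕ) (hm : 2 ≤ m) (ht : 2 ≤ t) (hs1 : 1 ≤ s) (hst : s ≤ t - 1)
    (G : Type*) [AddCommGroup G] (hG : Nonempty (G ≃+ ZMod m × ZMod m))
    (f1 f2 : G) (hb : IsBasisPair f1 f2)
    (hf1 : addOrderOf f1 = m) (hf2 : addOrderOf f2 = m)
    (a : Fin ((t - s) * m) → ℕ) (ha : ∀ i, a i ≤ m - 1)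
    (hsum : (∑ i, a i) ≡ 1 [MOD m]) :
    (Multiset.replicate (s * m - 1) f1 +
        Multiset.map (fun i => a i • f1 + f2) Finset.univ.val) ≠ 0 ∧
    (Multiset.replicate (s * m - 1) f1 +
        Multiset.map (fun i => a i • f1 + f2) Finset.univ.val).sum = 0 ∧
    (Multiset.replicate (s * m - 1) f1 +
        Multiset.map (fun i => a i • f1 + f2) Finset.univ.val).card = t * m - 1 ∧
    ¬ ∃ parts : Fin t → Multiset G,
        (∀ i, parts i ≠ 0 ∧ (parts i).sum = 0) ∧
        (Multiset.replicate (s * m - 1) f1 +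
          Multiset.map (fun i => a i • f1 + f2) Finset.univ.val) = ∑ i, parts i := by
  classical
  obtain ⟨-, hind⟩ := hb
  have hm0 : 0 < m := by omega
  have hsm1 : 1 ≤ s * m := Nat.one_le_iff_ne_zero.mpr (by positivity)
  have hN0 : 0 < (t - s) * m := Nat.mul_pos (by omega) hm0
  set S : Multiset G := Multiset.replicate (s * m - 1) f1 +
      Multiset.map (fun i => a i • f1 + f2) Finset.univ.val with hSdef
  have hf2ne : f2 ≠ 0 := by
    intro h
    rw [h, addOrderOf_zero] at hf2; omega
  set B : G → Prop := fun x => ∃ c : ℤ, x = c • f1 + f2 with hBdef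
  have hf1B : ¬ B f1 := by
    rintro ⟨c, hc⟩
    have h0 : (c - 1) • f1 + (1 : ℤ) • f2 = 0 := by
      rw [sub_smul, one_smul, one_smul, sub_add_eq_add_sub, ← hc, sub_self]
    have := (hind _ _ h0).2
    rw [one_smul] at this
    exact hf2ne this
  have hmemB : ∀ i, B (a i • f1 + f2) := fun i => ⟨(a i : ℤ), by rw [natCast_zsmul]⟩
  have hmemS : ∀ x ∈ S, x = f1 ∨ B x := by
    intro x hx
    rw [hSdef, Multiset.mem_add] at hx
    rcases hx with hx | hx
    · exact Or.inl (Multiset.eq_of_mem_replicate hx)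
    · right
      obtain ⟨i, _, rfl⟩ := Multiset.mem_map.mp hx
      exact hmemB i
  -- Lemma A: decomposition of the sum of a subsequence
  have lemA : ∀ P : Multiset G, (∀ x ∈ P, x = f1 ∨ B x) →
      ∃ c : ℤ, P.sum = c • f1 + (((P.filter B).card : ℤ)) • f2 := by
    intro P
    induction P using Multiset.induction_on with
    | empty => intro _; exact ⟨0, by simp⟩
    | cons x P ih =>
      intro h
      obtain ⟨c, hc⟩ := ih (fun y hy => h y (Multiset.mem_cons_of_mem hy))
      rcases h x (Multiset.mem_cons_self x P) with rfl | hxB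
      · refine ⟨c + 1, ?_⟩
        rw [Multiset.sum_cons, hc, Multiset.filter_cons_of_neg _ hf1B]
        rw [add_smul, one_smul]; abel
      · obtain ⟨d, rfl⟩ := hxB
        refine ⟨c + d, ?_⟩
        rw [Multiset.sum_cons, hc, Multiset.filter_cons_of_pos _ ⟨d, rfl⟩]
        rw [Multiset.card_cons]
        push_cast
        rw [add_smul, add_smul, one_smul]; abel
  have keyDvd : ∀ P : Multiset G, (∀ x ∈ P, x = f1 ∨ B x) → P.sum = 0 →
      m ∣ (P.filter B).card := by
    intro P hP h0
    obtain ⟨c, hc⟩ := lemA P hP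
    rw [h0] at hc
    have h2 := (hind c _ hc.symm).2
    rw [natCast_zsmul] at h2
    rw [← hf2]
    exact addOrderOf_dvd_of_nsmul_eq_zero h2
  have hfilterS : (S.filter B).card = (t - s) * m := by
    rw [hSdef, Multiset.filter_add]
    rw [Multiset.filter_eq_nil.mpr (fun x hx => by
        rw [Multiset.eq_of_mem_replicate hx]; exact hf1B)]
    rw [Multiset.filter_eq_self.mpr (fun x hx => by
        obtain ⟨i, _, rfl⟩ := Multiset.mem_map.mp hx; exact hmemB i)]
    simp
  have harith : s * m ≤ t * m := Nat.mul_le_mul_right m (by omega)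
  have harith2 : (t - s) * m = t * m - s * m := Nat.sub_mul t s m
  have hcardS : Multiset.card S = t * m - 1 := by
    rw [hSdef]
    simp only [Multiset.card_add, Multiset.card_replicate, Multiset.card_map]
    simp only [Finset.card_val, Finset.card_univ, Fintype.card_fin]
    omega
  have hdvdNat : m ∣ (s * m - 1 + ∑ i, a i) := by
    have h1 : (s * m - 1 + ∑ i, a i) ≡ (s * m - 1 + 1) [MOD m] := Nat.ModEq.add_left _ hsum
    have h2 : s * m - 1 + 1 = s * m := by omega
    have h3 : (s * m : ℕ) ≡ 0 [MOD m] := (Nat.modEq_zero_iff_dvd).mpr ⟨s, by ring⟩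
    rw [h2] at h1
    exact (Nat.modEq_zero_iff_dvd).mp (h1.trans h3)
  have hsumS : S.sum = 0 := by
    rw [hSdef, Multiset.sum_add, Multiset.sum_replicate]
    rw [← Finset.sum_eq_multiset_sum]
    rw [Finset.sum_add_distrib, ← Finset.sum_smul, Finset.sum_const, Finset.card_univ,
      Fintype.card_fin]
    rw [← add_assoc, ← add_nsmul]
    have e1 : (s * m - 1 + ∑ i, a i) • f1 = 0 := by
      rw [← addOrderOf_dvd_iff_nsmul_eq_zero, hf1]; exact hdvdNat
    have e2 : ((t - s) * m) • f2 = 0 := by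
      rw [← addOrderOf_dvd_iff_nsmul_eq_zero, hf2]; exact dvd_mul_left m (t - s)
    rw [e1, e2, add_zero]
  refine ⟨?_, hsumS, hcardS, ?_⟩
  · intro h
    rw [h] at hcardS
    simp at hcardS
    omega
  · rintro ⟨parts, hparts, hSeq⟩
    have hle : ∀ j, parts j ≤ S := by
      intro j; rw [hSeq]
      exact Finset.single_le_sum (f := parts) (fun i _ => zero_le) (Finset.mem_univ j)
    set k : Fin t → ℕ := fun i => ((parts i).filter B).card with hk
    have hki : ∀ i, m ∣ k i := fun i =>
      keyDvd _ (fun x hx => hmemS x (Multiset.mem_of_le (hle i) hx)) (hparts i).2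
    have hfil : ∀ u : Finset (Fin t),
        ((∑ i ∈ u, parts i).filter B) = ∑ i ∈ u, (parts i).filter B := by
      intro u
      induction u using Finset.induction_on with
      | empty => simp
      | insert _ _ hni ih =>
        rw [Finset.sum_insert hni, Finset.sum_insert hni, Multiset.filter_add, ih]
    have hcardsum : ∀ (g : Fin t → Multiset G) (u : Finset (Fin t)),
        Multiset.card (∑ i ∈ u, g i) = ∑ i ∈ u, Multiset.card (g i) := by
      intro g u
      induction u using Finset.induction_on with
      | empty => simp
      | insert _ _ hni ih =>
        rw [Finset.sum_insert hni, Finset.sum_insert hni, Multiset.card_add, ih]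
    have hksum : ∑ i, k i = (t - s) * m := by
      rw [← hfilterS, hSeq, hfil, hcardsum]
    have hcards : ∑ i, (parts i).card = t * m - 1 := by
      rw [← hcardS, hSeq, hcardsum]
    set T : Finset (Fin t) := Finset.univ.filter (fun i => k i ≠ 0) with hT
    set U : Finset (Fin t) := Finset.univ.filter (fun i => ¬ k i ≠ 0) with hU
    have hTcard : T.card * m ≤ (t - s) * m := by
      calc T.card * m = ∑ _i ∈ T, m := by rw [Finset.sum_const, smul_eq_mul]
        _ ≤ ∑ i ∈ T, k i := Finset.sum_le_sum (fun i hi =>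
            Nat.le_of_dvd (Nat.pos_of_ne_zero (Finset.mem_filter.mp hi).2) (hki i))
        _ ≤ ∑ i, k i := Finset.sum_le_sum_of_subset (Finset.filter_subset _ _)
        _ = (t - s) * m := hksum
    have hTle : T.card ≤ t - s := Nat.le_of_mul_le_mul_right hTcard hm0
    have hpure : ∀ i ∈ U, m ≤ (parts i).card := by
      intro i hi
      have hk0 : k i = 0 := by
        have := (Finset.mem_filter.mp hi).2
        tauto
      have hall : ∀ x ∈ parts i, x = f1 := by
        intro x hx
        rcases hmemS x (Multiset.mem_of_le (hle i) hx) with h | h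
        · exact h
        · exfalso
          have hmem : x ∈ (parts i).filter B := Multiset.mem_filter.mpr ⟨hx, h⟩
          rw [hk, Multiset.card_eq_zero] at hk0
          rw [hk0] at hmem
          exact Multiset.notMem_zero x hmem
      have hrep : parts i = Multiset.replicate (parts i).card f1 :=
        Multiset.eq_replicate_card.mpr hall
      have hsum0 := (hparts i).2
      rw [hrep, Multiset.sum_replicate] at hsum0
      have hdvd : m ∣ (parts i).card := by
        rw [← hf1]; exact addOrderOf_dvd_of_nsmul_eq_zero hsum0
      have hpos : (parts i).card ≠ 0 := fun h0 => (hparts i).1 (Multiset.card_eq_zero.mp h0)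
      exact Nat.le_of_dvd (Nat.pos_of_ne_zero hpos) hdvd
    have hsplit : ∑ i ∈ T, (parts i).card + ∑ i ∈ U, (parts i).card = t * m - 1 := by
      rw [hT, hU]
      rw [Finset.sum_filter_add_sum_filter_not Finset.univ (fun i => k i ≠ 0)
        (fun i => (parts i).card)]
      exact hcards
    have hbound1 : (t - s) * m ≤ ∑ i ∈ T, (parts i).card := by
      have h1 : ∑ i ∈ T, k i ≤ ∑ i ∈ T, (parts i).card :=
        Finset.sum_le_sum (fun i _ => Multiset.card_le_card (Multiset.filter_le B _))
      have h2 : ∑ i ∈ T, k i = (t - s) * m := by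
        rw [← hksum, hT]
        exact Finset.sum_filter_ne_zero Finset.univ
      omega
    have hcardTc : T.card + U.card = t := by
      rw [hT, hU]
      rw [Finset.card_filter_add_card_filter_not]
      simp
    have hbound2 : U.card * m ≤ ∑ i ∈ U, (parts i).card := by
      calc U.card * m = ∑ _i ∈ U, m := by rw [Finset.sum_const, smul_eq_mul]
        _ ≤ _ := Finset.sum_le_sum hpure
    have hUs : s ≤ U.card := by omega
    have hstm : s * m ≤ U.card * m := Nat.mul_le_mul_right m hUs
    omega
end

section
/- Let m ≥ 2 and n ≥ 1, and let T be a sequence of length (n+1−s)m over C_m² (for some s ∈ [1,n]) all of whose terms are of the form a f₁ + f₂ with {f₁, f₂} a basis of C_m², and such that σ(T) = f₁. Then T admits a factorization T = S₀ S₁ ⋯ S_{n−s} where each S_i has length m, σ(S_i) = 0 for i ∈ [1, n−s], and σ(S₀) = f₁. -/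
open Multiset

private lemma zsmul_eq_of_cast_eq' (m : ℕ) {G : Type*} [AddCommGroup G] (f1 : G)
    (hf1 : addOrderOf f1 = m) (a b : ℤ) (h : (a : ZMod m) = (b : ZMod m)) :
    a • f1 = b • f1 := by
  have hd : ((m : ℤ)) ∣ a - b := by
    rwa [← ZMod.intCast_zmod_eq_zero_iff_dvd, Int.cast_sub, sub_eq_zero]
  have : (a - b) • f1 = 0 := by
    rw [← addOrderOf_dvd_iff_zsmul_eq_zero, hf1]; exact hd
  rw [sub_zsmul] at this
  exact add_neg_eq_zero.mp this

section Aux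

variable (m : ℕ) {G : Type*} [AddCommGroup G] (f1 f2 : G)

/-- projection to the `f1`-coefficient mod `m`, via choice. -/
private noncomputable def phi (g : G) : ZMod m :=
  letI := Classical.dec (∃ a : ℤ, g = a • f1 + f2)
  if h : ∃ a : ℤ, g = a • f1 + f2 then ((h.choose : ZMod m)) else 0

private lemma phi_rep (hm : 2 ≤ m) (hf1 : addOrderOf f1 = m) (g : G)
    (h : ∃ a : ℤ, g = a • f1 + f2) :
    g = (((phi m f1 f2 g).val : ℤ)) • f1 + f2 := by
  haveI : NeZero m := ⟨by omega⟩
  simp only [phi]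
  rw [dif_pos h]
  have h1 : g = h.choose • f1 + f2 := h.choose_spec
  have h2 : h.choose • f1 = (((h.choose : ZMod m)).val : ℤ) • f1 := by
    apply zsmul_eq_of_cast_eq' m f1 hf1
    push_cast
    rw [ZMod.natCast_val, ZMod.cast_id]
  exact h1.trans (by rw [h2])

private lemma sum_rep (hm : 2 ≤ m) (hf1 : addOrderOf f1 = m)
    (S : Multiset G) (hS : ∀ g ∈ S, ∃ a : ℤ, g = a • f1 + f2) :
    S.sum = ((S.map fun g => (((phi m f1 f2 g).val : ℤ))).sum) • f1
      + (Multiset.card S) • f2 := by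
  induction S using Multiset.induction_on with
  | empty => simp
  | cons a S ih =>
    have ha := phi_rep m f1 f2 hm hf1 a (hS a (mem_cons_self a S))
    have hS' : ∀ g ∈ S, ∃ b : ℤ, g = b • f1 + f2 :=
      fun g hg => hS g (mem_cons_of_mem hg)
    rw [sum_cons, map_cons, sum_cons, card_cons, ih hS']
    nth_rewrite 1 [ha]
    rw [add_zsmul, succ_nsmul]
    abel

/-- Extract a zero-sum submultiset of size `m` whenever at least `2m-1` terms remain. -/
private lemma exists_zero_sum_sub (hm : 2 ≤ m) (hf1 : addOrderOf f1 = m)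
    (hf2 : addOrderOf f2 = m) (T : Multiset G) (hcard : 2 * m - 1 ≤ Multiset.card T)
    (hT : ∀ g ∈ T, ∃ a : ℤ, g = a • f1 + f2) :
    ∃ S ≤ T, Multiset.card S = m ∧ S.sum = 0 := by
  haveI : NeZero m := ⟨by omega⟩
  classical
  obtain ⟨t, hts, htcard, htsum⟩ := ZMod.erdos_ginzburg_ziv
    (s := T.toEnumFinset) (fun p => phi m f1 f2 p.1) (by simpa using hcard)
  refine ⟨t.val.map Prod.fst, Multiset.map_fst_le_of_subset_toEnumFinset hts, by rw [card_map]; exact htcard, ?_⟩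
  set S : Multiset G := t.val.map Prod.fst with hSdef
  have hSle : S ≤ T := Multiset.map_fst_le_of_subset_toEnumFinset hts
  have hSmem : ∀ g ∈ S, ∃ a : ℤ, g = a • f1 + f2 := fun g hg => hT g (mem_of_le hSle hg)
  have hsum0 : (S.map fun g => phi m f1 f2 g).sum = 0 := by
    rw [hSdef, Multiset.map_map]
    exact htsum
  have key : ∀ (L : Multiset ℤ), ((L.sum : ℤ) : ZMod m) = (L.map (Int.cast : ℤ → ZMod m)).sum := by
    intro L
    induction L using Multiset.induction_on with
    | empty => simp
    | cons a L ih => simp [ih]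
  have hcast : (((S.map fun g => (((phi m f1 f2 g).val : ℤ))).sum : ℤ) : ZMod m) = 0 := by
    rw [key, Multiset.map_map, ← hsum0]
    congr 1
    apply Multiset.map_congr rfl
    intro g _
    simp [ZMod.natCast_val, ZMod.cast_id]
  have h1 : ((S.map fun g => (((phi m f1 f2 g).val : ℤ))).sum) • f1 = 0 := by
    have := zsmul_eq_of_cast_eq' m f1 hf1
      ((S.map fun g => (((phi m f1 f2 g).val : ℤ))).sum) 0 (by simpa using hcast)
    simpa using this
  have h2 : m • f2 = 0 := by rw [← hf2]; exact addOrderOf_nsmul_eq_zero f2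
  rw [sum_rep m f1 f2 hm hf1 S hSmem, h1, zero_add]
  have : Multiset.card S = m := by rw [hSdef, card_map]; exact htcard
  rw [this, h2]

private lemma aux_factor (hm : 2 ≤ m) (hf1 : addOrderOf f1 = m) (hf2 : addOrderOf f2 = m) :
    ∀ (k : ℕ) (T : Multiset G), Multiset.card T = (k + 1) * m →
      (∀ g ∈ T, ∃ a : ℤ, g = a • f1 + f2) →
      ∃ parts : Fin (k + 1) → Multiset G,
        T = ∑ i, parts i ∧ (∀ i, (parts i).card = m) ∧
        (∀ i, i ≠ 0 → (parts i).sum = 0) := by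
  intro k
  induction k with
  | zero =>
    intro T hcard hmem
    refine ⟨fun _ => T, by simp, fun i => by simpa using hcard, fun i hi => absurd (Fin.fin_one_eq_zero i) hi⟩
  | succ k ih =>
    intro T hcard hmem
    classical
    obtain ⟨S, hSle, hScard, hSsum⟩ := exists_zero_sum_sub m f1 f2 hm hf1 hf2 T
      (by
        rw [hcard]
        have : 2 * m ≤ (k + 1 + 1) * m := Nat.mul_le_mul_right m (by omega)
        omega) hmem
    have hT'card : Multiset.card (T - S) = (k + 1) * m := by
      rw [Multiset.card_sub hSle, hcard, hScard]; ring_nf; omega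
    have hT'mem : ∀ g ∈ T - S, ∃ a : ℤ, g = a • f1 + f2 :=
      fun g hg => hmem g (mem_of_le (Multiset.sub_le_self T S) hg)
    obtain ⟨parts', hps, hpc, hp0⟩ := ih (T - S) hT'card hT'mem
    refine ⟨Fin.snoc parts' S, ?_, ?_, ?_⟩
    · rw [Fin.sum_univ_castSucc]
      simp only [Fin.snoc_castSucc, Fin.snoc_last]
      rw [← hps, tsub_add_cancel_of_le hSle]
    · intro i
      induction i using Fin.lastCases with
      | last => simpa using hScard
      | cast i => simpa using hpc i
    · intro i hi
      induction i using Fin.lastCases with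
      | last => simpa using hSsum
      | cast i =>
        have : i ≠ 0 := by
          intro h; apply hi; rw [h]; rfl
        simpa using hp0 i this

end Aux

/-- A sequence `T` of length `(n+1-s)m` over `C_m²` with all terms of the form
`a f₁ + f₂` and sum `f₁` admits an admissible factorization `T = S₀ S₁ ⋯ S_{n-s}`. -/
theorem stmt_13 (m n s : ℕ) (hm : 2 ≤ m) (hn : 1 ≤ n) (hs1 : 1 ≤ s) (hsn : s ≤ n)
    (G : Type*) [AddCommGroup G] (hG : Nonempty (G ≃+ ZMod m × ZMod m))
    (f1 f2 : G) (hb : IsBasisPair f1 f2)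
    (hf1 : addOrderOf f1 = m) (hf2 : addOrderOf f2 = m)
    (T : Multiset G) (hTcard : T.card = (n + 1 - s) * m)
    (hT : ∀ g ∈ T, ∃ a : ℤ, g = a • f1 + f2) (hTsum : T.sum = f1) :
    ∃ parts : Fin (n - s + 1) → Multiset G,
      T = ∑ i, parts i ∧ (∀ i, (parts i).card = m) ∧
      (parts 0).sum = f1 ∧ (∀ i, i ≠ 0 → (parts i).sum = 0) := by
  have hk : n + 1 - s = (n - s) + 1 := by omega
  rw [hk] at hTcard
  obtain ⟨parts, hps, hpc, hp0⟩ := aux_factor m f1 f2 hm hf1 hf2 (n - s) T hTcard hT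
  refine ⟨parts, hps, hpc, ?_, hp0⟩
  have hsum : T.sum = ∑ i, (parts i).sum := by
    rw [hps]
    exact map_sum Multiset.sumAddMonoidHom parts Finset.univ
  rw [hTsum] at hsum
  have := Fintype.sum_eq_single (f := fun i => (parts i).sum) 0 (fun i hi => hp0 i hi)
  rw [this] at hsum
  exact hsum.symm
end
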